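/- arXiv:2103.04187 — 3 statements merged into one kernel-verified Lean document; each statement's English description precedes it below -/
import Mathlib

section
/- Strict triangularity with respect to homogeneity. Let D be one of the operators ∂₁, ∂₂, or z^γ̄·D^(𝐧) (multiplication by the monomial z^γ̄ composed with D^(𝐧)) where 𝐧 ∈ ℕ² is arbitrary (including 𝐧 = 0) and the multi-index γ̄ satisfies [γ̄] ≥ 0 and |γ̄| > |𝐧|. Then for all multi-indices γ′, β′: if the z^{β′}-coefficient of D(z^{γ′}) is nonzero, then |γ′| < |β′|. -/
open MvPolynomial

abbrev N2 : Type := {p : ℕ × ℕ // p ≠ (0, 0)}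
abbrev Idx : Type := ℕ ⊕ N2
abbrev MIdx : Type := Idx →₀ ℕ
abbrev PS : Type := MvPowerSeries Idx ℝ

noncomputable section

/-- the weight `|𝐧| = w₁ n₁ + w₂ n₂` of `𝐧 ∈ ℕ²`. -/
def wt (w₁ w₂ : ℝ) (n : ℕ × ℕ) : ℝ := w₁ * n.1 + w₂ * n.2

/-- `[γ] = Σ_k k γ(k) − Σ_{𝐧≠0} γ(𝐧)`. -/
def brk (γ : MIdx) : ℤ :=
  γ.sum fun i n =>
    match i with
    | Sum.inl k => (k : ℤ) * n
    | Sum.inr _ => -(n : ℤ)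

/-- `Σ_{𝐦≠0} |𝐦| γ(𝐦)`. -/
def wsum (w₁ w₂ : ℝ) (γ : MIdx) : ℝ :=
  γ.sum fun i n =>
    match i with
    | Sum.inl _ => 0
    | Sum.inr m => wt w₁ w₂ m.1 * n

/-- the homogeneity `|γ| = α([γ]+1) + Σ_{𝐧≠0}|𝐧|γ(𝐧)`. -/
def homdeg (α w₁ w₂ : ℝ) (γ : MIdx) : ℝ := α * ((brk γ : ℝ) + 1) + wsum w₁ w₂ γ

/-! ### operators on monomials (polynomial level) -/

/-- `D^(0) z^γ = Σ_k (k+1) γ(k) z^{γ - e_k + e_{k+1}}`. -/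
def D0mono (γ : MIdx) : MvPolynomial Idx ℝ :=
  γ.sum fun i n =>
    match i with
    | Sum.inl k =>
        (((k + 1) * n : ℕ) : ℝ) •
          monomial (γ - Finsupp.single (Sum.inl k) 1 + Finsupp.single (Sum.inl (k + 1)) 1) 1
    | Sum.inr _ => 0

/-- `D^(𝐧) z^γ = ∂_{z_𝐧} z^γ` for `𝐧 ≠ 0`. -/
def DNmono (m : N2) (γ : MIdx) : MvPolynomial Idx ℝ :=
  ((γ (Sum.inr m) : ℕ) : ℝ) • monomial (γ - Finsupp.single (Sum.inr m) 1) 1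

/-- `D^(𝐧) z^γ` for arbitrary `𝐧 ∈ ℕ²`. -/
def Dmono (n : ℕ × ℕ) (γ : MIdx) : MvPolynomial Idx ℝ :=
  if h : n = (0, 0) then D0mono γ else DNmono ⟨n, h⟩ γ

lemma add10_ne (n : ℕ × ℕ) : n + (1, 0) ≠ (0, 0) := by
  intro h
  exact Nat.succ_ne_zero n.1 (congrArg Prod.fst h)

lemma add01_ne (n : ℕ × ℕ) : n + (0, 1) ≠ (0, 0) := by
  intro h
  exact Nat.succ_ne_zero n.2 (congrArg Prod.snd h)

def v10 : N2 := ⟨(1, 0), by decide⟩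
def v01 : N2 := ⟨(0, 1), by decide⟩

/-- `∂₁ z^γ = z_{(1,0)} D^(0) z^γ + Σ_{𝐧≠0} (n₁+1) z_{𝐧+(1,0)} ∂_{z_𝐧} z^γ`. -/
def d1mono (γ : MIdx) : MvPolynomial Idx ℝ :=
  X (Sum.inr v10) * D0mono γ +
    γ.sum fun i n =>
      match i with
      | Sum.inl _ => 0
      | Sum.inr m =>
          (((m.1.1 + 1) * n : ℕ) : ℝ) •
            monomial
              (γ - Finsupp.single (Sum.inr m) 1 +
                Finsupp.single (Sum.inr ⟨m.1 + (1, 0), add10_ne m.1⟩) 1) 1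

/-- `∂₂ z^γ`. -/
def d2mono (γ : MIdx) : MvPolynomial Idx ℝ :=
  X (Sum.inr v01) * D0mono γ +
    γ.sum fun i n =>
      match i with
      | Sum.inl _ => 0
      | Sum.inr m =>
          (((m.1.2 + 1) * n : ℕ) : ℝ) •
            monomial
              (γ - Finsupp.single (Sum.inr m) 1 +
                Finsupp.single (Sum.inr ⟨m.1 + (0, 1), add01_ne m.1⟩) 1) 1

/-! ### operators on power series (coefficientwise) -/

/-- coefficient of `D^(0) f` at `β`. -/
def D0coeff (f : PS) (β : MIdx) : ℝ :=
  ∑ i ∈ β.support,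
    match i with
    | Sum.inl (k + 1) =>
        (((k + 1) * (β (Sum.inl k) + 1) : ℕ) : ℝ) *
          MvPowerSeries.coeff
            (β + Finsupp.single (Sum.inl k) 1 - Finsupp.single (Sum.inl (k + 1)) 1) f
    | _ => 0

/-- `D^(0)` on power series. -/
def D0series (f : PS) : PS := D0coeff f

/-- `D^(𝐧) = ∂_{z_𝐧}` on power series, `𝐧 ≠ 0`. -/
def DNseries (m : N2) (f : PS) : PS :=
  fun β => ((β (Sum.inr m) + 1 : ℕ) : ℝ) *
    MvPowerSeries.coeff (β + Finsupp.single (Sum.inr m) 1) f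

/-- `D^(𝐧)` on power series for arbitrary `𝐧 ∈ ℕ²`. -/
def Dseries (n : ℕ × ℕ) (f : PS) : PS :=
  if h : n = (0, 0) then D0series f else DNseries ⟨n, h⟩ f

/-- coefficient of `∂₁ f` at `β`. -/
def d1coeff (f : PS) (β : MIdx) : ℝ :=
  (if 1 ≤ β (Sum.inr v10) then D0coeff f (β - Finsupp.single (Sum.inr v10) 1) else 0) +
    ∑ i ∈ β.support,
      match i with
      | Sum.inl _ => 0
      | Sum.inr p =>
          if hp : ((p.1.1 - 1, p.1.2) : ℕ × ℕ) ≠ (0, 0) ∧ 1 ≤ p.1.1 then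
            (p.1.1 : ℝ) *
              ((((β - Finsupp.single (Sum.inr p) 1 : MIdx) (Sum.inr ⟨(p.1.1 - 1, p.1.2), hp.1⟩) : ℕ) + 1 : ℕ) : ℝ) *
              MvPowerSeries.coeff
                (β - Finsupp.single (Sum.inr p) 1 +
                  Finsupp.single (Sum.inr ⟨(p.1.1 - 1, p.1.2), hp.1⟩) 1) f
          else 0

/-- `∂₁` on power series. -/
def d1series (f : PS) : PS := d1coeff f

/-- coefficient of `∂₂ f` at `β`. -/
def d2coeff (f : PS) (β : MIdx) : ℝ :=
  (if 1 ≤ β (Sum.inr v01) then D0coeff f (β - Finsupp.single (Sum.inr v01) 1) else 0) +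
    ∑ i ∈ β.support,
      match i with
      | Sum.inl _ => 0
      | Sum.inr p =>
          if hp : ((p.1.1, p.1.2 - 1) : ℕ × ℕ) ≠ (0, 0) ∧ 1 ≤ p.1.2 then
            (p.1.2 : ℝ) *
              ((((β - Finsupp.single (Sum.inr p) 1 : MIdx) (Sum.inr ⟨(p.1.1, p.1.2 - 1), hp.1⟩) : ℕ) + 1 : ℕ) : ℝ) *
              MvPowerSeries.coeff
                (β - Finsupp.single (Sum.inr p) 1 +
                  Finsupp.single (Sum.inr ⟨(p.1.1, p.1.2 - 1), hp.1⟩) 1) f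
          else 0

/-- `∂₂` on power series. -/
def d2series (f : PS) : PS := d2coeff f

/-- the operator `z^γ·D^(𝐧)` on power series. -/
def opOf (γ : MIdx) (n : ℕ × ℕ) (f : PS) : PS :=
  MvPowerSeries.monomial γ 1 * Dseries n f

/-- the dual model space `T̃*`. -/
def Ttilde : Set PS := {f | ∀ γ : MIdx, MvPowerSeries.coeff γ f ≠ 0 → 0 ≤ brk γ}

/-- the dual model space `T*`. -/
def Tstar : Set PS :=
  {f | ∀ γ : MIdx, MvPowerSeries.coeff γ f ≠ 0 →
      0 ≤ brk γ ∨ ∃ m : N2, γ = Finsupp.single (Sum.inr m) 1}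

/-! ### topology and the realization property -/

instance : TopologicalSpace PS := inferInstanceAs (TopologicalSpace ((Idx →₀ ℕ) → ℝ))

/-- `Γ` realizes the family `(π^(𝐧))_{𝐧∈ℕ²}`. -/
def Realizes (Γ : PS →ₐ[ℝ] PS) (π : ℕ × ℕ → PS) : Prop :=
  Continuous Γ ∧
    (∀ m : N2, Γ (MvPowerSeries.X (Sum.inr m)) = MvPowerSeries.X (Sum.inr m) + π m.1) ∧
    (∀ k : ℕ, HasSum
      (fun l : ℕ => ((k + l).choose k : ℝ) • (π (0, 0) ^ l * MvPowerSeries.X (Sum.inl (k + l))))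
      (Γ (MvPowerSeries.X (Sum.inl k))))

end


/-! ### auxiliary lemmas for stmt1 -/

noncomputable section Aux

private def ell (α w₁ w₂ : ℝ) (γ : MIdx) : ℝ := α * (brk γ : ℝ) + wsum w₁ w₂ γ

private lemma homdeg_eq (α w₁ w₂ : ℝ) (γ : MIdx) :
    homdeg α w₁ w₂ γ = α + ell α w₁ w₂ γ := by
  unfold homdeg ell; ring

private lemma brk_add (a b : MIdx) : brk (a + b) = brk a + brk b := by
  unfold brk
  apply Finsupp.sum_add_index' <;> intro i <;> cases i <;>
    intros <;> simp [mul_add, neg_add] <;> ring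

private lemma wsum_add (w₁ w₂ : ℝ) (a b : MIdx) :
    wsum w₁ w₂ (a + b) = wsum w₁ w₂ a + wsum w₁ w₂ b := by
  unfold wsum
  apply Finsupp.sum_add_index' <;> intro i <;> cases i <;>
    intros <;> simp [mul_add]

private lemma ell_add (α w₁ w₂ : ℝ) (a b : MIdx) :
    ell α w₁ w₂ (a + b) = ell α w₁ w₂ a + ell α w₁ w₂ b := by
  unfold ell
  rw [brk_add, wsum_add]; push_cast; ring

private lemma ell_single_inl (α w₁ w₂ : ℝ) (k : ℕ) :
    ell α w₁ w₂ (Finsupp.single (Sum.inl k) 1) = α * k := by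
  unfold ell brk wsum
  rw [Finsupp.sum_single_index (by simp), Finsupp.sum_single_index (by simp)]
  push_cast; ring

private lemma ell_single_inr (α w₁ w₂ : ℝ) (m : N2) :
    ell α w₁ w₂ (Finsupp.single (Sum.inr m) 1) = wt w₁ w₂ m.1 - α := by
  unfold ell brk wsum
  rw [Finsupp.sum_single_index (by simp), Finsupp.sum_single_index (by simp)]
  push_cast; ring

private lemma sub_single_cancel {γ : MIdx} {i : Idx} (h : 1 ≤ γ i) :
    γ - Finsupp.single i 1 + Finsupp.single i 1 = γ :=
  tsub_add_cancel_of_le (Finsupp.single_le_iff.mpr h)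

private lemma ell_sub (α w₁ w₂ : ℝ) {γ : MIdx} {i : Idx} (h : 1 ≤ γ i) :
    ell α w₁ w₂ (γ - Finsupp.single i 1) =
      ell α w₁ w₂ γ - ell α w₁ w₂ (Finsupp.single i 1) := by
  have := ell_add α w₁ w₂ (γ - Finsupp.single i 1) (Finsupp.single i 1)
  rw [sub_single_cancel h] at this
  linarith

private lemma exists_of_coeff_sum {γ : MIdx} {f : Idx → ℕ → MvPolynomial Idx ℝ} {β : MIdx}
    (h : MvPolynomial.coeff β (γ.sum f) ≠ 0) :
    ∃ i ∈ γ.support, MvPolynomial.coeff β (f i (γ i)) ≠ 0 := by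
  rw [Finsupp.sum, MvPolynomial.coeff_sum] at h
  exact Finset.exists_ne_zero_of_sum_ne_zero h

private lemma of_coeff_smul_monomial {c : ℝ} {δ β : MIdx}
    (h : MvPolynomial.coeff β (c • MvPolynomial.monomial δ (1 : ℝ)) ≠ 0) :
    β = δ ∧ c ≠ 0 := by
  rw [MvPolynomial.coeff_smul, MvPolynomial.coeff_monomial] at h
  by_cases hd : δ = β
  · exact ⟨hd.symm, by simpa [hd] using h⟩
  · simp [hd] at h

private lemma monomial_mul_smul_monomial (τ : MIdx) (c : ℝ) (δ : MIdx) :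
    MvPolynomial.monomial τ (1 : ℝ) * (c • MvPolynomial.monomial δ (1 : ℝ)) =
      c • MvPolynomial.monomial (τ + δ) (1 : ℝ) := by
  rw [mul_smul_comm, MvPolynomial.monomial_mul, one_mul]

private lemma X_mul_smul_monomial (v : Idx) (c : ℝ) (δ : MIdx) :
    MvPolynomial.X v * (c • MvPolynomial.monomial δ (1 : ℝ)) =
      c • MvPolynomial.monomial (δ + Finsupp.single v 1) (1 : ℝ) := by
  rw [MvPolynomial.X, monomial_mul_smul_monomial, add_comm]

end Aux

/-- **Strict triangularity with respect to homogeneity.** -/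
theorem stmt1 (α w₁ w₂ : ℝ) (hα : 0 < α) (hw₁ : 0 < w₁) (hw₂ : 0 < w₂) :
    (∀ γ' β' : MIdx, MvPolynomial.coeff β' (d1mono γ') ≠ 0 →
        homdeg α w₁ w₂ γ' < homdeg α w₁ w₂ β') ∧
    (∀ γ' β' : MIdx, MvPolynomial.coeff β' (d2mono γ') ≠ 0 →
        homdeg α w₁ w₂ γ' < homdeg α w₁ w₂ β') ∧
    (∀ (γbar : MIdx) (n : ℕ × ℕ), 0 ≤ brk γbar → wt w₁ w₂ n < homdeg α w₁ w₂ γbar →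
        ∀ γ' β' : MIdx,
          MvPolynomial.coeff β' (MvPolynomial.monomial γbar 1 * Dmono n γ') ≠ 0 →
            homdeg α w₁ w₂ γ' < homdeg α w₁ w₂ β') := by
  have key : ∀ {a b : ℝ}, a + b ≠ 0 → a ≠ 0 ∨ b ≠ 0 := fun {a b} h => by
    by_contra hc; push_neg at hc; exact h (by rw [hc.1, hc.2, add_zero])
  refine ⟨?_, ?_, ?_⟩
  · -- ∂₁
    intro γ' β' h
    rw [homdeg_eq, homdeg_eq]
    unfold d1mono at h
    rw [MvPolynomial.coeff_add] at h
    obtain hA | hB := key h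
    · unfold D0mono at hA
      rw [Finsupp.mul_sum] at hA
      obtain ⟨i, hi, hc⟩ := exists_of_coeff_sum hA
      cases i with
      | inr m => simp at hc
      | inl k =>
        rw [X_mul_smul_monomial] at hc
        obtain ⟨hβ, -⟩ := of_coeff_smul_monomial hc
        have hk : 1 ≤ γ' (Sum.inl k) :=
          Nat.one_le_iff_ne_zero.mpr (Finsupp.mem_support_iff.mp hi)
        subst hβ
        rw [ell_add, ell_add, ell_sub α w₁ w₂ hk, ell_single_inl, ell_single_inl,
          ell_single_inr]
        simp only [wt, v10]
        push_cast
        nlinarith [hw₁, hα]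
    · obtain ⟨i, hi, hc⟩ := exists_of_coeff_sum hB
      cases i with
      | inl k => simp at hc
      | inr m =>
        obtain ⟨hβ, -⟩ := of_coeff_smul_monomial hc
        have hk : 1 ≤ γ' (Sum.inr m) :=
          Nat.one_le_iff_ne_zero.mpr (Finsupp.mem_support_iff.mp hi)
        subst hβ
        rw [ell_add, ell_sub α w₁ w₂ hk, ell_single_inr, ell_single_inr]
        simp only [wt, Prod.fst_add, Prod.snd_add]
        push_cast
        nlinarith [hw₁, hα]
  · -- ∂₂
    intro γ' β' h
    rw [homdeg_eq, homdeg_eq]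
    unfold d2mono at h
    rw [MvPolynomial.coeff_add] at h
    obtain hA | hB := key h
    · unfold D0mono at hA
      rw [Finsupp.mul_sum] at hA
      obtain ⟨i, hi, hc⟩ := exists_of_coeff_sum hA
      cases i with
      | inr m => simp at hc
      | inl k =>
        rw [X_mul_smul_monomial] at hc
        obtain ⟨hβ, -⟩ := of_coeff_smul_monomial hc
        have hk : 1 ≤ γ' (Sum.inl k) :=
          Nat.one_le_iff_ne_zero.mpr (Finsupp.mem_support_iff.mp hi)
        subst hβ
        rw [ell_add, ell_add, ell_sub α w₁ w₂ hk, ell_single_inl, ell_single_inl,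
          ell_single_inr]
        simp only [wt, v01]
        push_cast
        nlinarith [hw₂, hα]
    · obtain ⟨i, hi, hc⟩ := exists_of_coeff_sum hB
      cases i with
      | inl k => simp at hc
      | inr m =>
        obtain ⟨hβ, -⟩ := of_coeff_smul_monomial hc
        have hk : 1 ≤ γ' (Sum.inr m) :=
          Nat.one_le_iff_ne_zero.mpr (Finsupp.mem_support_iff.mp hi)
        subst hβ
        rw [ell_add, ell_sub α w₁ w₂ hk, ell_single_inr, ell_single_inr]
        simp only [wt, Prod.fst_add, Prod.snd_add]
        push_cast
        nlinarith [hw₂, hα]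
  · -- z^γ̄ · D^(𝐧)
    intro γbar n hbrk hwt γ' β' h
    rw [homdeg_eq] at hwt
    rw [homdeg_eq, homdeg_eq]
    unfold Dmono at h
    split_ifs at h with hn
    · subst hn
      simp only [wt, Nat.cast_zero, mul_zero, add_zero] at hwt
      unfold D0mono at h
      rw [Finsupp.mul_sum] at h
      obtain ⟨i, hi, hc⟩ := exists_of_coeff_sum h
      cases i with
      | inr m => simp at hc
      | inl k =>
        rw [monomial_mul_smul_monomial] at hc
        obtain ⟨hβ, -⟩ := of_coeff_smul_monomial hc
        have hk : 1 ≤ γ' (Sum.inl k) :=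
          Nat.one_le_iff_ne_zero.mpr (Finsupp.mem_support_iff.mp hi)
        subst hβ
        rw [ell_add, ell_add, ell_sub α w₁ w₂ hk, ell_single_inl, ell_single_inl]
        push_cast
        nlinarith [hα]
    · unfold DNmono at h
      rw [monomial_mul_smul_monomial] at h
      obtain ⟨hβ, hcne⟩ := of_coeff_smul_monomial h
      have hk : 1 ≤ γ' (Sum.inr ⟨n, hn⟩) := by
        rcases Nat.eq_zero_or_pos (γ' (Sum.inr ⟨n, hn⟩)) with h0 | h1
        · rw [h0] at hcne; simp at hcne
        · exact h1
      subst hβ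
      rw [ell_add, ell_sub α w₁ w₂ hk, ell_single_inr]
      simp only
      linarith
end

section
/- Faà di Bruno-type identity for the shift generators (formula (fw21)). For every l ∈ ℕ and every 𝐦 = (m₁,m₂) ∈ ℕ², the following identity holds in ℝ[z_k,z_𝐧]: (1/(m₁!·m₂!))·∂₁^{m₁}∂₂^{m₂}(l!·z_l) = Σ_{k≥0} ((l+k)!/k!)·z_{k+l}·( Σ z_{𝐧₁}···z_{𝐧ₖ} ), where the inner sum runs over all ordered k-tuples (𝐧₁,…,𝐧ₖ) of elements of ℕ²∖{0} with 𝐧₁+⋯+𝐧ₖ = 𝐦 (for k = 0 the inner sum is 1 if 𝐦 = 0 and 0 otherwise); only the terms with k ≤ m₁+m₂ are nonzero, so the outer sum is finite. -/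
open MvPolynomial

/-- `∂₁` on polynomials. -/
noncomputable def d1poly (p : MvPolynomial Idx ℝ) : MvPolynomial Idx ℝ :=
  ∑ γ ∈ p.support, MvPolynomial.coeff γ p • d1mono γ

/-- `∂₂` on polynomials. -/
noncomputable def d2poly (p : MvPolynomial Idx ℝ) : MvPolynomial Idx ℝ :=
  ∑ γ ∈ p.support, MvPolynomial.coeff γ p • d2mono γ

/-! ### auxiliary machinery -/
noncomputable section
namespace FW21

def genSum (c : Idx → ℕ) (s : Idx → MIdx) (γ : MIdx) : MvPolynomial Idx ℝ :=
  γ.sum fun i n => ((c i * n : ℕ) : ℝ) • monomial (γ - Finsupp.single i 1 + s i) 1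

lemma genSum_eq_sum (c : Idx → ℕ) (s : Idx → MIdx) (γ : MIdx) (U : Finset Idx)
    (hU : γ.support ⊆ U) :
    genSum c s γ
      = ∑ i ∈ U, ((c i * γ i : ℕ) : ℝ) • monomial (γ - Finsupp.single i 1 + s i) (1 : ℝ) := by
  rw [genSum, Finsupp.sum]
  apply Finset.sum_subset hU
  intro i _ hi
  simp [Finsupp.notMem_support_iff.mp hi]

lemma sub_single_add (γ δ : MIdx) (i : Idx) (h : 1 ≤ γ i) :
    γ + δ - Finsupp.single i 1 = γ - Finsupp.single i 1 + δ := by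
  ext a
  rcases eq_or_ne i a with rfl | hne
  · simp only [Finsupp.tsub_apply, Finsupp.add_apply, Finsupp.single_eq_same]
    omega
  · simp [Finsupp.single_eq_of_ne' hne, Finsupp.tsub_apply]

lemma genSum_add (c : Idx → ℕ) (s : Idx → MIdx) (γ δ : MIdx) :
    genSum c s (γ + δ) = monomial δ 1 * genSum c s γ + monomial γ 1 * genSum c s δ := by
  classical
  have h1 : ∀ (α β : MIdx) (i : Idx),
      ((c i * α i : ℕ) : ℝ) • monomial (α + β - Finsupp.single i 1 + s i) (1 : ℝ)
        = monomial β 1 * (((c i * α i : ℕ) : ℝ) • monomial (α - Finsupp.single i 1 + s i) 1) := by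
    intro α β i
    rcases Nat.eq_zero_or_pos (α i) with h0 | hp
    · simp [h0]
    · rw [sub_single_add α β i hp, mul_smul_comm, monomial_mul, one_mul,
        show α - Finsupp.single i 1 + β + s i = β + (α - Finsupp.single i 1 + s i) from by
          ext a; simp only [Finsupp.add_apply]; omega]
  rw [genSum_eq_sum c s (γ + δ) (γ.support ∪ δ.support) Finsupp.support_add,
      genSum_eq_sum c s γ (γ.support ∪ δ.support) Finset.subset_union_left,
      genSum_eq_sum c s δ (γ.support ∪ δ.support) Finset.subset_union_right,
      Finset.mul_sum, Finset.mul_sum, ← Finset.sum_add_distrib]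
  refine Finset.sum_congr rfl fun i _ => ?_
  have hγδ : (γ + δ) i = γ i + δ i := rfl
  rw [hγδ, Nat.mul_add, Nat.cast_add, add_smul, h1 γ δ i]
  have h2 := h1 δ γ i
  rw [add_comm δ γ] at h2
  rw [h2]

lemma genSum_single (c : Idx → ℕ) (s : Idx → MIdx) (i : Idx) :
    genSum c s (Finsupp.single i 1) = ((c i : ℕ) : ℝ) • monomial (s i) 1 := by
  rw [genSum, Finsupp.sum_single_index (by simp)]
  simp

lemma genSum_zero (c : Idx → ℕ) (s : Idx → MIdx) : genSum c s 0 = 0 :=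
  Finsupp.sum_zero_index

/-! coefficient/shift data for `∂₁`, `∂₂` -/

def c0 : Idx → ℕ := fun i => match i with | Sum.inl k => k + 1 | Sum.inr _ => 0
def s0 : Idx → MIdx := fun i => match i with
  | Sum.inl k => Finsupp.single (Sum.inl (k + 1)) 1 | Sum.inr _ => 0
def c1 : Idx → ℕ := fun i => match i with | Sum.inl _ => 0 | Sum.inr m => m.1.1 + 1
def s1 : Idx → MIdx := fun i => match i with
  | Sum.inl _ => 0 | Sum.inr m => Finsupp.single (Sum.inr ⟨m.1 + (1, 0), add10_ne m.1⟩) 1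
def c2 : Idx → ℕ := fun i => match i with | Sum.inl _ => 0 | Sum.inr m => m.1.2 + 1
def s2 : Idx → MIdx := fun i => match i with
  | Sum.inl _ => 0 | Sum.inr m => Finsupp.single (Sum.inr ⟨m.1 + (0, 1), add01_ne m.1⟩) 1

lemma D0mono_eq (γ : MIdx) : D0mono γ = genSum c0 s0 γ := by
  unfold D0mono genSum
  apply Finsupp.sum_congr
  intro i _
  cases i with
  | inl k => rfl
  | inr m => simp [c0]

lemma d1mono_eq (γ : MIdx) :
    d1mono γ = X (Sum.inr v10) * genSum c0 s0 γ + genSum c1 s1 γ := by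
  unfold d1mono genSum
  rw [D0mono_eq]
  congr 1
  apply Finsupp.sum_congr
  intro i _
  cases i with
  | inl k => simp [c1]
  | inr m => rfl

lemma d2mono_eq (γ : MIdx) :
    d2mono γ = X (Sum.inr v01) * genSum c0 s0 γ + genSum c2 s2 γ := by
  unfold d2mono genSum
  rw [D0mono_eq]
  congr 1
  apply Finsupp.sum_congr
  intro i _
  cases i with
  | inl k => simp [c2]
  | inr m => rfl

lemma d1mono_add (γ δ : MIdx) :
    d1mono (γ + δ) = monomial δ 1 * d1mono γ + monomial γ 1 * d1mono δ := by
  rw [d1mono_eq, d1mono_eq, d1mono_eq, genSum_add, genSum_add]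
  ring

lemma d2mono_add (γ δ : MIdx) :
    d2mono (γ + δ) = monomial δ 1 * d2mono γ + monomial γ 1 * d2mono δ := by
  rw [d2mono_eq, d2mono_eq, d2mono_eq, genSum_add, genSum_add]
  ring

lemma d1mono_zero : d1mono 0 = 0 := by
  rw [d1mono_eq, genSum_zero, genSum_zero]; ring

lemma d2mono_zero : d2mono 0 = 0 := by
  rw [d2mono_eq, genSum_zero, genSum_zero]; ring

lemma d1mono_single_inl (k : ℕ) :
    d1mono (Finsupp.single (Sum.inl k) 1)
      = ((k + 1 : ℕ) : ℝ) • (X (Sum.inr v10) * X (Sum.inl (k + 1))) := by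
  rw [d1mono_eq, genSum_single, genSum_single]
  simp [c0, c1, s0, X, mul_smul_comm]

lemma d2mono_single_inl (k : ℕ) :
    d2mono (Finsupp.single (Sum.inl k) 1)
      = ((k + 1 : ℕ) : ℝ) • (X (Sum.inr v01) * X (Sum.inl (k + 1))) := by
  rw [d2mono_eq, genSum_single, genSum_single]
  simp [c0, c2, s0, X, mul_smul_comm]

lemma d1mono_single_inr (n : N2) :
    d1mono (Finsupp.single (Sum.inr n) 1)
      = ((n.1.1 + 1 : ℕ) : ℝ) • X (Sum.inr ⟨n.1 + (1, 0), add10_ne n.1⟩) := by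
  rw [d1mono_eq, genSum_single, genSum_single]
  simp [c0, c1, s1, X]

lemma d2mono_single_inr (n : N2) :
    d2mono (Finsupp.single (Sum.inr n) 1)
      = ((n.1.2 + 1 : ℕ) : ℝ) • X (Sum.inr ⟨n.1 + (0, 1), add01_ne n.1⟩) := by
  rw [d2mono_eq, genSum_single, genSum_single]
  simp [c0, c2, s2, X]

/-! ### `d1poly`, `d2poly`: linearity and Leibniz rule -/

lemma d1poly_monomial (γ : MIdx) (a : ℝ) : d1poly (monomial γ a) = a • d1mono γ := by
  unfold d1poly
  rcases eq_or_ne a 0 with rfl | ha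
  · simp
  · rw [support_monomial, if_neg ha]
    simp [coeff_monomial]

lemma d2poly_monomial (γ : MIdx) (a : ℝ) : d2poly (monomial γ a) = a • d2mono γ := by
  unfold d2poly
  rcases eq_or_ne a 0 with rfl | ha
  · simp
  · rw [support_monomial, if_neg ha]
    simp [coeff_monomial]

lemma d1poly_def' (p : MvPolynomial Idx ℝ) :
    d1poly p = Finsupp.sum (AddMonoidAlgebra.coeff p) fun γ c => c • d1mono γ := rfl

lemma d2poly_def' (p : MvPolynomial Idx ℝ) :
    d2poly p = Finsupp.sum (AddMonoidAlgebra.coeff p) fun γ c => c • d2mono γ := rfl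

lemma d1poly_add (p q : MvPolynomial Idx ℝ) : d1poly (p + q) = d1poly p + d1poly q := by
  rw [d1poly_def', d1poly_def', d1poly_def', AddMonoidAlgebra.coeff_add]
  exact Finsupp.sum_add_index' (by simp) (fun a b₁ b₂ => add_smul _ _ _)

lemma d2poly_add (p q : MvPolynomial Idx ℝ) : d2poly (p + q) = d2poly p + d2poly q := by
  rw [d2poly_def', d2poly_def', d2poly_def', AddMonoidAlgebra.coeff_add]
  exact Finsupp.sum_add_index' (by simp) (fun a b₁ b₂ => add_smul _ _ _)

lemma d1poly_smul (a : ℝ) (p : MvPolynomial Idx ℝ) : d1poly (a • p) = a • d1poly p := by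
  rw [d1poly_def', d1poly_def', show AddMonoidAlgebra.coeff (a • p) = a • AddMonoidAlgebra.coeff p from rfl]
  rw [Finsupp.sum_smul_index' (fun i => by simp), Finsupp.smul_sum]
  simp [smul_smul]

lemma d2poly_smul (a : ℝ) (p : MvPolynomial Idx ℝ) : d2poly (a • p) = a • d2poly p := by
  rw [d2poly_def', d2poly_def', show AddMonoidAlgebra.coeff (a • p) = a • AddMonoidAlgebra.coeff p from rfl]
  rw [Finsupp.sum_smul_index' (fun i => by simp), Finsupp.smul_sum]
  simp [smul_smul]

def d1hom : MvPolynomial Idx ℝ →ₗ[ℝ] MvPolynomial Idx ℝ where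
  toFun := d1poly
  map_add' := d1poly_add
  map_smul' := d1poly_smul

def d2hom : MvPolynomial Idx ℝ →ₗ[ℝ] MvPolynomial Idx ℝ where
  toFun := d2poly
  map_add' := d2poly_add
  map_smul' := d2poly_smul

lemma d1poly_sum {ι : Type*} (s : Finset ι) (f : ι → MvPolynomial Idx ℝ) :
    d1poly (∑ i ∈ s, f i) = ∑ i ∈ s, d1poly (f i) := map_sum d1hom f s

lemma d2poly_sum {ι : Type*} (s : Finset ι) (f : ι → MvPolynomial Idx ℝ) :
    d2poly (∑ i ∈ s, f i) = ∑ i ∈ s, d2poly (f i) := map_sum d2hom f s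

lemma d1poly_mul (p q : MvPolynomial Idx ℝ) :
    d1poly (p * q) = p * d1poly q + q * d1poly p := by
  induction p using MvPolynomial.induction_on' with
  | add p1 p2 ih1 ih2 => rw [add_mul, d1poly_add, ih1, ih2, d1poly_add]; ring
  | monomial γ c =>
    induction q using MvPolynomial.induction_on' with
    | add q1 q2 ih1 ih2 => rw [mul_add, d1poly_add, ih1, ih2, d1poly_add]; ring
    | monomial δ d =>
      have e : ∀ (θ : MIdx) (a : ℝ), (monomial θ a : MvPolynomial Idx ℝ) = C a * monomial θ 1 :=
        fun θ a => by rw [C_mul_monomial, mul_one]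
      rw [monomial_mul, d1poly_monomial, d1poly_monomial, d1poly_monomial, d1mono_add,
        e γ c, e δ d]
      simp only [smul_eq_C_mul, map_mul]
      ring

lemma d2poly_mul (p q : MvPolynomial Idx ℝ) :
    d2poly (p * q) = p * d2poly q + q * d2poly p := by
  induction p using MvPolynomial.induction_on' with
  | add p1 p2 ih1 ih2 => rw [add_mul, d2poly_add, ih1, ih2, d2poly_add]; ring
  | monomial γ c =>
    induction q using MvPolynomial.induction_on' with
    | add q1 q2 ih1 ih2 => rw [mul_add, d2poly_add, ih1, ih2, d2poly_add]; ring
    | monomial δ d =>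
      have e : ∀ (θ : MIdx) (a : ℝ), (monomial θ a : MvPolynomial Idx ℝ) = C a * monomial θ 1 :=
        fun θ a => by rw [C_mul_monomial, mul_one]
      rw [monomial_mul, d2poly_monomial, d2poly_monomial, d2poly_monomial, d2mono_add,
        e γ c, e δ d]
      simp only [smul_eq_C_mul, map_mul]
      ring

lemma d1poly_one : d1poly 1 = 0 := by
  have h : (1 : MvPolynomial Idx ℝ) = monomial 0 1 := by simp
  rw [h, d1poly_monomial, d1mono_zero, smul_zero]

lemma d2poly_one : d2poly 1 = 0 := by
  have h : (1 : MvPolynomial Idx ℝ) = monomial 0 1 := by simp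
  rw [h, d2poly_monomial, d2mono_zero, smul_zero]

lemma d1poly_X_inl (k : ℕ) :
    d1poly (X (Sum.inl k)) = ((k + 1 : ℕ) : ℝ) • (X (Sum.inr v10) * X (Sum.inl (k + 1))) := by
  rw [show (X (Sum.inl k) : MvPolynomial Idx ℝ) = monomial (Finsupp.single (Sum.inl k) 1) 1
    from rfl, d1poly_monomial, one_smul, d1mono_single_inl]

lemma d2poly_X_inl (k : ℕ) :
    d2poly (X (Sum.inl k)) = ((k + 1 : ℕ) : ℝ) • (X (Sum.inr v01) * X (Sum.inl (k + 1))) := by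
  rw [show (X (Sum.inl k) : MvPolynomial Idx ℝ) = monomial (Finsupp.single (Sum.inl k) 1) 1
    from rfl, d2poly_monomial, one_smul, d2mono_single_inl]

lemma d1poly_X_inr (n : N2) :
    d1poly (X (Sum.inr n)) = ((n.1.1 + 1 : ℕ) : ℝ) • X (Sum.inr ⟨n.1 + (1, 0), add10_ne n.1⟩) := by
  rw [show (X (Sum.inr n) : MvPolynomial Idx ℝ) = monomial (Finsupp.single (Sum.inr n) 1) 1
    from rfl, d1poly_monomial, one_smul, d1mono_single_inr]

lemma d2poly_X_inr (n : N2) :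
    d2poly (X (Sum.inr n)) = ((n.1.2 + 1 : ℕ) : ℝ) • X (Sum.inr ⟨n.1 + (0, 1), add01_ne n.1⟩) := by
  rw [show (X (Sum.inr n) : MvPolynomial Idx ℝ) = monomial (Finsupp.single (Sum.inr n) 1) 1
    from rfl, d2poly_monomial, one_smul, d2mono_single_inr]

lemma d1poly_prod {ι : Type*} [DecidableEq ι] (s : Finset ι) (f : ι → MvPolynomial Idx ℝ) :
    d1poly (∏ i ∈ s, f i) = ∑ i ∈ s, d1poly (f i) * ∏ j ∈ s.erase i, f j := by
  induction s using Finset.induction_on with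
  | empty => simp [d1poly_one]
  | @insert a s ha ih =>
    have hs : ∀ i ∈ s, d1poly (f i) * ∏ j ∈ (insert a s).erase i, f j
        = f a * (d1poly (f i) * ∏ j ∈ s.erase i, f j) := by
      intro i hi
      rw [Finset.erase_insert_of_ne (by rintro rfl; exact ha hi),
        Finset.prod_insert (fun h => ha (Finset.mem_of_mem_erase h))]
      ring
    rw [Finset.prod_insert ha, d1poly_mul, ih, Finset.mul_sum, Finset.sum_insert ha,
      Finset.erase_insert ha, Finset.sum_congr rfl hs]
    ring

lemma d2poly_prod {ι : Type*} [DecidableEq ι] (s : Finset ι) (f : ι → MvPolynomial Idx ℝ) :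
    d2poly (∏ i ∈ s, f i) = ∑ i ∈ s, d2poly (f i) * ∏ j ∈ s.erase i, f j := by  induction s using Finset.induction_on with
  | empty => simp [d2poly_one]
  | @insert a s ha ih =>
    have hs : ∀ i ∈ s, d2poly (f i) * ∏ j ∈ (insert a s).erase i, f j
        = f a * (d2poly (f i) * ∏ j ∈ s.erase i, f j) := by
      intro i hi
      rw [Finset.erase_insert_of_ne (by rintro rfl; exact ha hi),
        Finset.prod_insert (fun h => ha (Finset.mem_of_mem_erase h))]
      ring
    rw [Finset.prod_insert ha, d2poly_mul, ih, Finset.mul_sum, Finset.sum_insert ha,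
      Finset.erase_insert ha, Finset.sum_congr rfl hs]
    ring

/-! ### the combinatorial sums -/

def setT (k : ℕ) (m : ℕ × ℕ) : Set (Fin k → N2) := {t | (∑ j, (t j).1) = m}

lemma setT_finite (k : ℕ) (m : ℕ × ℕ) : (setT k m).Finite := by
  have hS : ({n : N2 | n.1 ≤ m} : Set N2).Finite := by
    have h1 : ({n : N2 | n.1 ≤ m} : Set N2) = Subtype.val ⁻¹' (Set.Iic m) := rfl
    rw [h1]
    exact Set.Finite.preimage (Set.injOn_of_injective Subtype.val_injective)
      (Set.finite_Iic m)
  apply Set.Finite.subset (Set.Finite.pi fun _ : Fin k => hS)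
  intro t ht
  intro j _
  have : (t j).1 ≤ ∑ i, (t i).1 :=
    Finset.single_le_sum (f := fun i => (t i).1) (fun i _ => zero_le) (Finset.mem_univ j)
  have ht' : (∑ i, (t i).1) = m := ht
  exact ht' ▸ this

def finT (k : ℕ) (m : ℕ × ℕ) : Finset (Fin k → N2) := (setT_finite k m).toFinset

lemma mem_finT {k : ℕ} {m : ℕ × ℕ} {t : Fin k → N2} :
    t ∈ finT k m ↔ (∑ j, (t j).1) = m := by
  simp [finT, setT, Set.Finite.mem_toFinset]

def TT (k : ℕ) (m : ℕ × ℕ) : MvPolynomial Idx ℝ :=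
  ∑ t ∈ finT k m, ∏ j, X (Sum.inr (t j))

lemma TT_finsum (k : ℕ) (m : ℕ × ℕ) :
    (∑ᶠ t ∈ {t : Fin k → N2 | (∑ j, (t j).1) = m}, ∏ j, (X (Sum.inr (t j)) : MvPolynomial Idx ℝ))
      = TT k m :=
  finsum_mem_eq_finite_toFinset_sum _ (setT_finite k m)

lemma finT_empty_of_lt {k : ℕ} {m : ℕ × ℕ} (h : m.1 + m.2 < k) : finT k m = ∅ := by
  rw [Finset.eq_empty_iff_forall_notMem]
  intro t ht
  rw [mem_finT] at ht
  have h1 : ∀ i : Fin k, 1 ≤ (t i).1.1 + (t i).1.2 := by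
    intro i
    rcases Nat.eq_zero_or_pos ((t i).1.1 + (t i).1.2) with h0 | hp
    · exact absurd (Prod.ext (by omega) (by omega)) (t i).2
    · exact hp
  have h2 : (k : ℕ) ≤ ∑ i : Fin k, ((t i).1.1 + (t i).1.2) := by
    calc (k : ℕ) = ∑ _i : Fin k, 1 := by simp
    _ ≤ _ := Finset.sum_le_sum fun i _ => h1 i
  rw [Finset.sum_add_distrib] at h2
  have e1 : ∑ i : Fin k, (t i).1.1 = m.1 := by rw [← Prod.fst_sum, ht]
  have e2 : ∑ i : Fin k, (t i).1.2 = m.2 := by rw [← Prod.snd_sum, ht]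
  omega

lemma TT_eq_zero_of_lt {k : ℕ} {m : ℕ × ℕ} (h : m.1 + m.2 < k) : TT k m = 0 := by
  rw [TT, finT_empty_of_lt h, Finset.sum_empty]

lemma finT_zero_ne {m : ℕ × ℕ} (h : m ≠ (0, 0)) : finT 0 m = ∅ := by
  rw [Finset.eq_empty_iff_forall_notMem]
  intro t ht
  rw [mem_finT] at ht
  exact h ((by simpa using ht.symm : m = 0).trans rfl)

lemma TT_zero_ne {m : ℕ × ℕ} (h : m ≠ (0, 0)) : TT 0 m = 0 := by
  rw [TT, finT_zero_ne h, Finset.sum_empty]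

lemma TT_zero : TT 0 (0, 0) = 1 := by
  have h : finT 0 (0, 0) = {fun i : Fin 0 => i.elim0} := by
    ext t
    simp only [mem_finT, Finset.mem_singleton]
    constructor
    · intro _; exact funext fun i => i.elim0
    · intro _; simp; rfl
  rw [TT, h, Finset.sum_singleton, Finset.univ_eq_empty, Finset.prod_empty]

/-- the sum appearing in `∂₁ (TT k m)`. -/
def DS (k : ℕ) (m : ℕ × ℕ) : MvPolynomial Idx ℝ :=
  ∑ t ∈ finT k m, ∑ j, (((t j).1.1 + 1 : ℕ) : ℝ) •
    (X (Sum.inr ⟨(t j).1 + (1, 0), add10_ne (t j).1⟩) *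
      ∏ i ∈ Finset.univ.erase j, X (Sum.inr (t i)))

def DS2 (k : ℕ) (m : ℕ × ℕ) : MvPolynomial Idx ℝ :=
  ∑ t ∈ finT k m, ∑ j, (((t j).1.2 + 1 : ℕ) : ℝ) •
    (X (Sum.inr ⟨(t j).1 + (0, 1), add01_ne (t j).1⟩) *
      ∏ i ∈ Finset.univ.erase j, X (Sum.inr (t i)))

lemma d1poly_TT (k : ℕ) (m : ℕ × ℕ) : d1poly (TT k m) = DS k m := by
  rw [TT, DS, d1poly_sum]
  refine Finset.sum_congr rfl fun t _ => ?_
  rw [d1poly_prod]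
  refine Finset.sum_congr rfl fun j _ => ?_
  rw [d1poly_X_inr, smul_mul_assoc]

lemma d2poly_TT (k : ℕ) (m : ℕ × ℕ) : d2poly (TT k m) = DS2 k m := by
  rw [TT, DS2, d2poly_sum]
  refine Finset.sum_congr rfl fun t _ => ?_
  rw [d2poly_prod]
  refine Finset.sum_congr rfl fun j _ => ?_
  rw [d2poly_X_inr, smul_mul_assoc]

lemma DS_zero (m : ℕ × ℕ) : DS 0 m = 0 := by
  rw [DS]
  refine Finset.sum_eq_zero fun t _ => ?_
  simp

lemma DS2_zero (m : ℕ × ℕ) : DS2 0 m = 0 := by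
  rw [DS2]
  refine Finset.sum_eq_zero fun t _ => ?_
  simp

lemma DS_eq_zero_of_lt {k : ℕ} {m : ℕ × ℕ} (h : m.1 + m.2 < k) : DS k m = 0 := by
  rw [DS, finT_empty_of_lt h, Finset.sum_empty]

lemma DS2_eq_zero_of_lt {k : ℕ} {m : ℕ × ℕ} (h : m.1 + m.2 < k) : DS2 k m = 0 := by
  rw [DS2, finT_empty_of_lt h, Finset.sum_empty]

/-! ### the key combinatorial recursion -/

def lower1 (n : N2) : N2 :=
  if h : (n.1 - (1, 0) : ℕ × ℕ) = (0, 0) then n else ⟨n.1 - (1, 0), h⟩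

lemma lower1_spec {n : N2} (h : n ≠ v10) (hg : 1 ≤ n.1.1) : lower1 n = ⟨n.1 - (1, 0),
    by
      intro hc
      apply h
      apply Subtype.ext
      have h1 : n.1.1 - 1 = 0 := congrArg Prod.fst hc
      have h2 : n.1.2 - 0 = 0 := congrArg Prod.snd hc
      show n.1 = (1, 0)
      exact Prod.ext (by omega) (by omega)⟩ := by
  unfold lower1
  rw [dif_neg]

lemma lower1_add (n : N2) : lower1 ⟨n.1 + (1, 0), add10_ne n.1⟩ = n := by
  have hsub : ((n.1 + (1, 0) : ℕ × ℕ) - (1, 0)) = n.1 :=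
    Prod.ext (by show n.1.1 + 1 - 1 = n.1.1; omega) (by show n.1.2 + 0 - 0 = n.1.2; omega)
  unfold lower1
  rw [dif_neg (by rw [hsub]; exact n.2)]
  exact Subtype.ext hsub

lemma star1 (k : ℕ) (m : ℕ × ℕ) :
    ((m.1 + 1 : ℕ) : ℝ) • TT (k + 1) (m + (1, 0))
      = ((k + 1 : ℕ) : ℝ) • (X (Sum.inr v10) * TT k m) + DS (k + 1) m := by
  classical
  set c : (Fin (k + 1) → N2) → Fin (k + 1) → MvPolynomial Idx ℝ :=
    fun t j => ((t j).1.1 : ℝ) • ∏ i, X (Sum.inr (t i)) with hc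
  -- Step A : the left hand side as a weighted pair sum
  have hA : ((m.1 + 1 : ℕ) : ℝ) • TT (k + 1) (m + (1, 0))
      = ∑ t ∈ finT (k + 1) (m + (1, 0)), ∑ j, c t j := by
    rw [TT, Finset.smul_sum]
    refine Finset.sum_congr rfl fun t ht => ?_
    rw [hc]
    simp only []
    rw [← Finset.sum_smul, ← Nat.cast_sum]
    congr 2
    have h1 : ∑ j, (t j).1.1 = (m + (1, 0)).1 := by rw [← Prod.fst_sum, mem_finT.mp ht]
    rw [h1]
    rfl
  -- Step B : split the inner sum in three parts
  have hsplit : ∀ t ∈ finT (k + 1) (m + (1, 0)), ∑ j, c t j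
      = ∑ j ∈ Finset.univ.filter (fun j => t j = v10), c t j
        + ∑ j ∈ (Finset.univ.filter fun j => ¬t j = v10).filter (fun j => 1 ≤ (t j).1.1),
            c t j := by
    intro t _
    rw [← Finset.sum_filter_add_sum_filter_not Finset.univ (fun j => t j = v10) (c t)]
    congr 1
    rw [← Finset.sum_filter_add_sum_filter_not
      (Finset.univ.filter fun j => ¬t j = v10) (fun j => 1 ≤ (t j).1.1) (c t)]
    have hz : ∑ j ∈ (Finset.univ.filter fun j => ¬t j = v10).filter
        (fun j => ¬1 ≤ (t j).1.1), c t j = 0 := by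
      refine Finset.sum_eq_zero fun j hj => ?_
      have h0 : (t j).1.1 = 0 := by
        have := (Finset.mem_filter.mp hj).2
        omega
      rw [hc]
      simp only [h0]
      simp
    rw [hz, add_zero]
  -- claim 1 : the `t j = v10` part comes from insertion
  have claim1 : ∑ x ∈ (finT k m).sigma (fun _ => (Finset.univ : Finset (Fin (k + 1)))),
        (X (Sum.inr v10) * ∏ i, X (Sum.inr (x.1 i)) : MvPolynomial Idx ℝ)
      = ∑ x ∈ (finT (k + 1) (m + (1, 0))).sigma
            (fun t => Finset.univ.filter fun j => t j = v10),
          c x.1 x.2 := by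
    refine Finset.sum_nbij' (fun x => ⟨x.2.insertNth v10 x.1, x.2⟩)
      (fun x => ⟨x.2.removeNth x.1, x.2⟩) ?_ ?_ ?_ ?_ ?_
    · rintro ⟨s, p⟩ hx
      dsimp only
      rw [Finset.mem_sigma] at hx ⊢
      refine ⟨mem_finT.mpr ?_, ?_⟩
      · rw [Fin.sum_univ_succAbove (fun i => (((p.insertNth v10 s : Fin (k + 1) → N2)) i).1) p]
        simp only [Fin.insertNth_apply_same, Fin.insertNth_apply_succAbove]
        rw [mem_finT.mp hx.1]
        exact add_comm _ _
      · simp [Fin.insertNth_apply_same]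
    · rintro ⟨t, j⟩ hx
      rw [Finset.mem_sigma] at hx ⊢
      obtain ⟨ht, hj⟩ := hx
      have hjv : t j = v10 := (Finset.mem_filter.mp hj).2
      refine ⟨mem_finT.mpr ?_, Finset.mem_univ _⟩
      have hsum := Fin.sum_univ_succAbove (fun i => (t i).1) j
      rw [mem_finT.mp ht, hjv] at hsum
      have : (v10.1 + m : ℕ × ℕ) = v10.1 + ∑ i : Fin k, (t (j.succAbove i)).1 := by
        rw [← hsum]; exact add_comm _ _
      exact (add_left_cancel this).symm
    · rintro ⟨s, p⟩ _
      simp [Fin.removeNth_insertNth]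
    · rintro ⟨t, j⟩ hx
      rw [Finset.mem_sigma] at hx
      have hjv : t j = v10 := (Finset.mem_filter.mp hx.2).2
      have : j.insertNth v10 (j.removeNth t) = t := by
        rw [← hjv, Fin.insertNth_self_removeNth]
      simp [this]
    · rintro ⟨s, p⟩ _
      simp only [hc]
      rw [Fin.prod_univ_succAbove (fun i =>
        (X (Sum.inr ((p.insertNth v10 s : Fin (k + 1) → N2) i)) : MvPolynomial Idx ℝ)) p]
      simp only [Fin.insertNth_apply_same, Fin.insertNth_apply_succAbove]
      simp [v10]
  -- claim 2 : the remaining part comes from raising one entry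
  have claim2 : ∑ x ∈ (finT (k + 1) m).sigma (fun _ => (Finset.univ : Finset (Fin (k + 1)))),
        (((x.1 x.2).1.1 + 1 : ℕ) : ℝ) •
          (X (Sum.inr ⟨(x.1 x.2).1 + (1, 0), add10_ne (x.1 x.2).1⟩) *
            ∏ i ∈ Finset.univ.erase x.2, X (Sum.inr (x.1 i)) : MvPolynomial Idx ℝ)
      = ∑ x ∈ (finT (k + 1) (m + (1, 0))).sigma
          (fun t => (Finset.univ.filter fun j => ¬t j = v10).filter fun j => 1 ≤ (t j).1.1),
          c x.1 x.2 := by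
    refine Finset.sum_nbij'
      (fun x => ⟨Function.update x.1 x.2 ⟨(x.1 x.2).1 + (1, 0), add10_ne (x.1 x.2).1⟩, x.2⟩)
      (fun x => ⟨Function.update x.1 x.2 (lower1 (x.1 x.2)), x.2⟩) ?_ ?_ ?_ ?_ ?_
    · rintro ⟨t, j⟩ hx
      dsimp only
      rw [Finset.mem_sigma] at hx ⊢
      obtain ⟨ht, -⟩ := hx
      have hup : (fun i => ((Function.update t j
            (⟨(t j).1 + (1, 0), add10_ne (t j).1⟩ : N2)) i).1)
          = Function.update (fun i => (t i).1) j ((t j).1 + (1, 0)) :=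
        funext (Function.apply_update (fun _ n => n.1) t j _)
      constructor
      · refine mem_finT.mpr ?_
        show ∑ i, ((Function.update t j _) i).1 = m + (1, 0)
        rw [hup, Finset.sum_update_of_mem (Finset.mem_univ j)]
        have he := Finset.add_sum_erase Finset.univ (fun i => (t i).1) (Finset.mem_univ j)
        rw [mem_finT.mp ht] at he
        rw [← Finset.erase_eq, add_right_comm, he]
      · rw [Finset.mem_filter, Finset.mem_filter]
        refine ⟨⟨Finset.mem_univ _, ?_⟩, ?_⟩
        · dsimp only
          rw [Function.update_self]
          intro hcon
          have : (t j).1 + (1, 0) = (1, 0) := congrArg Subtype.val hcon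
          apply (t j).2
          have h1 : (t j).1.1 + 1 = 1 := congrArg Prod.fst this
          have h2 : (t j).1.2 + 0 = 0 := congrArg Prod.snd this
          exact Prod.ext (by omega) (by omega)
        · dsimp only
          rw [Function.update_self]
          show 1 ≤ (t j).1.1 + 1
          omega
    · rintro ⟨t, j⟩ hx
      dsimp only
      rw [Finset.mem_sigma] at hx ⊢
      obtain ⟨ht, hj⟩ := hx
      have hne : ¬t j = v10 := (Finset.mem_filter.mp (Finset.mem_filter.mp hj).1).2
      have hge : 1 ≤ (t j).1.1 := (Finset.mem_filter.mp hj).2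
      have hw : (lower1 (t j)).1 = (t j).1 - (1, 0) :=
        congrArg Subtype.val (lower1_spec hne hge)
      have hup : (fun i => ((Function.update t j (lower1 (t j))) i).1)
          = Function.update (fun i => (t i).1) j ((lower1 (t j)).1) :=
        funext (Function.apply_update (fun _ n => n.1) t j (lower1 (t j)))
      refine ⟨mem_finT.mpr ?_, Finset.mem_univ _⟩
      show ∑ i, ((Function.update t j (lower1 (t j))) i).1 = m
      rw [hup, Finset.sum_update_of_mem (Finset.mem_univ j), hw]
      have he := Finset.add_sum_erase Finset.univ (fun i => (t i).1) (Finset.mem_univ j)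
      rw [mem_finT.mp ht] at he
      rw [← Finset.erase_eq]
      have h1 : (t j).1.1 + (∑ i ∈ Finset.univ.erase j, (t i).1).1 = m.1 + 1 := by
        have := congrArg Prod.fst he
        simpa using this
      have h2 : (t j).1.2 + (∑ i ∈ Finset.univ.erase j, (t i).1).2 = m.2 := by
        have := congrArg Prod.snd he
        simpa using this
      refine Prod.ext ?_ ?_
      · show (t j).1.1 - 1 + (∑ i ∈ Finset.univ.erase j, (t i).1).1 = m.1
        omega
      · show (t j).1.2 - 0 + (∑ i ∈ Finset.univ.erase j, (t i).1).2 = m.2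
        omega
    · rintro ⟨t, j⟩ _
      dsimp only
      simp only [Function.update_self, Function.update_idem, lower1_add,
        Function.update_eq_self]
    · rintro ⟨t, j⟩ hx
      rw [Finset.mem_sigma] at hx
      obtain ⟨ht, hj⟩ := hx
      have hne : ¬t j = v10 := (Finset.mem_filter.mp (Finset.mem_filter.mp hj).1).2
      have hge : 1 ≤ (t j).1.1 := (Finset.mem_filter.mp hj).2
      dsimp only
      simp only [Function.update_self, Function.update_idem]
      rw [lower1_spec hne hge]
      have hval : (⟨((t j).1 - (1, 0)) + (1, 0), add10_ne _⟩ : N2) = t j := by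
        apply Subtype.ext
        show ((t j).1 - (1, 0)) + (1, 0) = (t j).1
        refine Prod.ext ?_ ?_
        · show (t j).1.1 - 1 + 1 = (t j).1.1; omega
        · show (t j).1.2 - 0 + 0 = (t j).1.2; omega
      rw [hval, Function.update_eq_self]
    · rintro ⟨t, j⟩ _
      simp only [hc]
      have hupX : ∀ i, (X (Sum.inr (Function.update t j
            (⟨(t j).1 + (1, 0), add10_ne (t j).1⟩ : N2) i)) : MvPolynomial Idx ℝ)
          = Function.update (fun i => (X (Sum.inr (t i)) : MvPolynomial Idx ℝ)) j
              (X (Sum.inr ⟨(t j).1 + (1, 0), add10_ne (t j).1⟩)) i :=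
        Function.apply_update (fun _ n => (X (Sum.inr n) : MvPolynomial Idx ℝ)) t j _
      rw [Function.update_self, Finset.prod_congr rfl (fun i _ => hupX i),
        Finset.prod_update_of_mem (Finset.mem_univ j), ← Finset.erase_eq]
      rfl
  -- assemble
  rw [hA, Finset.sum_congr rfl hsplit, Finset.sum_add_distrib]
  congr 1
  · rw [Finset.sum_sigma', ← claim1, Finset.sum_sigma]
    rw [TT, Finset.mul_sum, Finset.smul_sum]
    refine Finset.sum_congr rfl fun s hs => ?_
    dsimp only
    rw [Finset.sum_const, Finset.card_univ, Fintype.card_fin, Nat.cast_smul_eq_nsmul]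
  · rw [Finset.sum_sigma', ← claim2, Finset.sum_sigma, DS]


def lower2 (n : N2) : N2 :=
  if h : (n.1 - (0, 1) : ℕ × ℕ) = (0, 0) then n else ⟨n.1 - (0, 1), h⟩

lemma lower2_spec {n : N2} (h : n ≠ v01) (hg : 1 ≤ n.1.2) : lower2 n = ⟨n.1 - (0, 1),
    by
      intro hc
      apply h
      apply Subtype.ext
      have h1 : n.1.1 - 0 = 0 := congrArg Prod.fst hc
      have h2 : n.1.2 - 1 = 0 := congrArg Prod.snd hc
      show n.1 = (0, 1)
      exact Prod.ext (by omega) (by omega)⟩ := by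
  unfold lower2
  rw [dif_neg]

lemma lower2_add (n : N2) : lower2 ⟨n.1 + (0, 1), add01_ne n.1⟩ = n := by
  have hsub : ((n.1 + (0, 1) : ℕ × ℕ) - (0, 1)) = n.1 :=
    Prod.ext (by show n.1.1 + 0 - 0 = n.1.1; omega) (by show n.1.2 + 1 - 1 = n.1.2; omega)
  unfold lower2
  rw [dif_neg (by rw [hsub]; exact n.2)]
  exact Subtype.ext hsub

lemma star2 (k : ℕ) (m : ℕ × ℕ) :
    ((m.2 + 1 : ℕ) : ℝ) • TT (k + 1) (m + (0, 1))
      = ((k + 1 : ℕ) : ℝ) • (X (Sum.inr v01) * TT k m) + DS2 (k + 1) m := by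
  classical
  set c : (Fin (k + 1) → N2) → Fin (k + 1) → MvPolynomial Idx ℝ :=
    fun t j => ((t j).1.2 : ℝ) • ∏ i, X (Sum.inr (t i)) with hc
  -- Step A : the left hand side as a weighted pair sum
  have hA : ((m.2 + 1 : ℕ) : ℝ) • TT (k + 1) (m + (0, 1))
      = ∑ t ∈ finT (k + 1) (m + (0, 1)), ∑ j, c t j := by
    rw [TT, Finset.smul_sum]
    refine Finset.sum_congr rfl fun t ht => ?_
    rw [hc]
    simp only []
    rw [← Finset.sum_smul, ← Nat.cast_sum]
    congr 2
    have h1 : ∑ j, (t j).1.2 = (m + (0, 1)).2 := by rw [← Prod.snd_sum, mem_finT.mp ht]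
    rw [h1]
    rfl
  -- Step B : split the inner sum in three parts
  have hsplit : ∀ t ∈ finT (k + 1) (m + (0, 1)), ∑ j, c t j
      = ∑ j ∈ Finset.univ.filter (fun j => t j = v01), c t j
        + ∑ j ∈ (Finset.univ.filter fun j => ¬t j = v01).filter (fun j => 1 ≤ (t j).1.2),
            c t j := by
    intro t _
    rw [← Finset.sum_filter_add_sum_filter_not Finset.univ (fun j => t j = v01) (c t)]
    congr 1
    rw [← Finset.sum_filter_add_sum_filter_not
      (Finset.univ.filter fun j => ¬t j = v01) (fun j => 1 ≤ (t j).1.2) (c t)]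
    have hz : ∑ j ∈ (Finset.univ.filter fun j => ¬t j = v01).filter
        (fun j => ¬1 ≤ (t j).1.2), c t j = 0 := by
      refine Finset.sum_eq_zero fun j hj => ?_
      have h0 : (t j).1.2 = 0 := by
        have := (Finset.mem_filter.mp hj).2
        omega
      rw [hc]
      simp only [h0]
      simp
    rw [hz, add_zero]
  -- claim 1 : the `t j = v01` part comes from insertion
  have claim1 : ∑ x ∈ (finT k m).sigma (fun _ => (Finset.univ : Finset (Fin (k + 1)))),
        (X (Sum.inr v01) * ∏ i, X (Sum.inr (x.1 i)) : MvPolynomial Idx ℝ)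
      = ∑ x ∈ (finT (k + 1) (m + (0, 1))).sigma
            (fun t => Finset.univ.filter fun j => t j = v01),
          c x.1 x.2 := by
    refine Finset.sum_nbij' (fun x => ⟨x.2.insertNth v01 x.1, x.2⟩)
      (fun x => ⟨x.2.removeNth x.1, x.2⟩) ?_ ?_ ?_ ?_ ?_
    · rintro ⟨s, p⟩ hx
      dsimp only
      rw [Finset.mem_sigma] at hx ⊢
      refine ⟨mem_finT.mpr ?_, ?_⟩
      · rw [Fin.sum_univ_succAbove (fun i => (((p.insertNth v01 s : Fin (k + 1) → N2)) i).1) p]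
        simp only [Fin.insertNth_apply_same, Fin.insertNth_apply_succAbove]
        rw [mem_finT.mp hx.1]
        exact add_comm _ _
      · simp [Fin.insertNth_apply_same]
    · rintro ⟨t, j⟩ hx
      rw [Finset.mem_sigma] at hx ⊢
      obtain ⟨ht, hj⟩ := hx
      have hjv : t j = v01 := (Finset.mem_filter.mp hj).2
      refine ⟨mem_finT.mpr ?_, Finset.mem_univ _⟩
      have hsum := Fin.sum_univ_succAbove (fun i => (t i).1) j
      rw [mem_finT.mp ht, hjv] at hsum
      have : (v01.1 + m : ℕ × ℕ) = v01.1 + ∑ i : Fin k, (t (j.succAbove i)).1 := by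
        rw [← hsum]; exact add_comm _ _
      exact (add_left_cancel this).symm
    · rintro ⟨s, p⟩ _
      simp [Fin.removeNth_insertNth]
    · rintro ⟨t, j⟩ hx
      rw [Finset.mem_sigma] at hx
      have hjv : t j = v01 := (Finset.mem_filter.mp hx.2).2
      have : j.insertNth v01 (j.removeNth t) = t := by
        rw [← hjv, Fin.insertNth_self_removeNth]
      simp [this]
    · rintro ⟨s, p⟩ _
      simp only [hc]
      rw [Fin.prod_univ_succAbove (fun i =>
        (X (Sum.inr ((p.insertNth v01 s : Fin (k + 1) → N2) i)) : MvPolynomial Idx ℝ)) p]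
      simp only [Fin.insertNth_apply_same, Fin.insertNth_apply_succAbove]
      simp [v01]
  -- claim 2 : the remaining part comes from raising one entry
  have claim2 : ∑ x ∈ (finT (k + 1) m).sigma (fun _ => (Finset.univ : Finset (Fin (k + 1)))),
        (((x.1 x.2).1.2 + 1 : ℕ) : ℝ) •
          (X (Sum.inr ⟨(x.1 x.2).1 + (0, 1), add01_ne (x.1 x.2).1⟩) *
            ∏ i ∈ Finset.univ.erase x.2, X (Sum.inr (x.1 i)) : MvPolynomial Idx ℝ)
      = ∑ x ∈ (finT (k + 1) (m + (0, 1))).sigma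
          (fun t => (Finset.univ.filter fun j => ¬t j = v01).filter fun j => 1 ≤ (t j).1.2),
          c x.1 x.2 := by
    refine Finset.sum_nbij'
      (fun x => ⟨Function.update x.1 x.2 ⟨(x.1 x.2).1 + (0, 1), add01_ne (x.1 x.2).1⟩, x.2⟩)
      (fun x => ⟨Function.update x.1 x.2 (lower2 (x.1 x.2)), x.2⟩) ?_ ?_ ?_ ?_ ?_
    · rintro ⟨t, j⟩ hx
      dsimp only
      rw [Finset.mem_sigma] at hx ⊢
      obtain ⟨ht, -⟩ := hx
      have hup : (fun i => ((Function.update t j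
            (⟨(t j).1 + (0, 1), add01_ne (t j).1⟩ : N2)) i).1)
          = Function.update (fun i => (t i).1) j ((t j).1 + (0, 1)) :=
        funext (Function.apply_update (fun _ n => n.1) t j _)
      constructor
      · refine mem_finT.mpr ?_
        show ∑ i, ((Function.update t j _) i).1 = m + (0, 1)
        rw [hup, Finset.sum_update_of_mem (Finset.mem_univ j)]
        have he := Finset.add_sum_erase Finset.univ (fun i => (t i).1) (Finset.mem_univ j)
        rw [mem_finT.mp ht] at he
        rw [← Finset.erase_eq, add_right_comm, he]
      · rw [Finset.mem_filter, Finset.mem_filter]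
        refine ⟨⟨Finset.mem_univ _, ?_⟩, ?_⟩
        · dsimp only
          rw [Function.update_self]
          intro hcon
          have : (t j).1 + (0, 1) = (0, 1) := congrArg Subtype.val hcon
          apply (t j).2
          have h1 : (t j).1.1 + 0 = 0 := congrArg Prod.fst this
          have h2 : (t j).1.2 + 1 = 1 := congrArg Prod.snd this
          exact Prod.ext (by omega) (by omega)
        · dsimp only
          rw [Function.update_self]
          show 1 ≤ (t j).1.2 + 1
          omega
    · rintro ⟨t, j⟩ hx
      dsimp only
      rw [Finset.mem_sigma] at hx ⊢
      obtain ⟨ht, hj⟩ := hx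
      have hne : ¬t j = v01 := (Finset.mem_filter.mp (Finset.mem_filter.mp hj).1).2
      have hge : 1 ≤ (t j).1.2 := (Finset.mem_filter.mp hj).2
      have hw : (lower2 (t j)).1 = (t j).1 - (0, 1) :=
        congrArg Subtype.val (lower2_spec hne hge)
      have hup : (fun i => ((Function.update t j (lower2 (t j))) i).1)
          = Function.update (fun i => (t i).1) j ((lower2 (t j)).1) :=
        funext (Function.apply_update (fun _ n => n.1) t j (lower2 (t j)))
      refine ⟨mem_finT.mpr ?_, Finset.mem_univ _⟩
      show ∑ i, ((Function.update t j (lower2 (t j))) i).1 = m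
      rw [hup, Finset.sum_update_of_mem (Finset.mem_univ j), hw]
      have he := Finset.add_sum_erase Finset.univ (fun i => (t i).1) (Finset.mem_univ j)
      rw [mem_finT.mp ht] at he
      rw [← Finset.erase_eq]
      have h1 : (t j).1.1 + (∑ i ∈ Finset.univ.erase j, (t i).1).1 = m.1 := by
        have := congrArg Prod.fst he
        simpa using this
      have h2 : (t j).1.2 + (∑ i ∈ Finset.univ.erase j, (t i).1).2 = m.2 + 1 := by
        have := congrArg Prod.snd he
        simpa using this
      refine Prod.ext ?_ ?_
      · show (t j).1.1 - 0 + (∑ i ∈ Finset.univ.erase j, (t i).1).1 = m.1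
        omega
      · show (t j).1.2 - 1 + (∑ i ∈ Finset.univ.erase j, (t i).1).2 = m.2
        omega
    · rintro ⟨t, j⟩ _
      dsimp only
      simp only [Function.update_self, Function.update_idem, lower2_add,
        Function.update_eq_self]
    · rintro ⟨t, j⟩ hx
      rw [Finset.mem_sigma] at hx
      obtain ⟨ht, hj⟩ := hx
      have hne : ¬t j = v01 := (Finset.mem_filter.mp (Finset.mem_filter.mp hj).1).2
      have hge : 1 ≤ (t j).1.2 := (Finset.mem_filter.mp hj).2
      dsimp only
      simp only [Function.update_self, Function.update_idem]
      rw [lower2_spec hne hge]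
      have hval : (⟨((t j).1 - (0, 1)) + (0, 1), add01_ne _⟩ : N2) = t j := by
        apply Subtype.ext
        show ((t j).1 - (0, 1)) + (0, 1) = (t j).1
        refine Prod.ext ?_ ?_
        · show (t j).1.1 - 0 + 0 = (t j).1.1; omega
        · show (t j).1.2 - 1 + 1 = (t j).1.2; omega
      rw [hval, Function.update_eq_self]
    · rintro ⟨t, j⟩ _
      simp only [hc]
      have hupX : ∀ i, (X (Sum.inr (Function.update t j
            (⟨(t j).1 + (0, 1), add01_ne (t j).1⟩ : N2) i)) : MvPolynomial Idx ℝ)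
          = Function.update (fun i => (X (Sum.inr (t i)) : MvPolynomial Idx ℝ)) j
              (X (Sum.inr ⟨(t j).1 + (0, 1), add01_ne (t j).1⟩)) i :=
        Function.apply_update (fun _ n => (X (Sum.inr n) : MvPolynomial Idx ℝ)) t j _
      rw [Function.update_self, Finset.prod_congr rfl (fun i _ => hupX i),
        Finset.prod_update_of_mem (Finset.mem_univ j), ← Finset.erase_eq]
      rfl
  -- assemble
  rw [hA, Finset.sum_congr rfl hsplit, Finset.sum_add_distrib]
  congr 1
  · rw [Finset.sum_sigma', ← claim1, Finset.sum_sigma]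
    rw [TT, Finset.mul_sum, Finset.smul_sum]
    refine Finset.sum_congr rfl fun s hs => ?_
    dsimp only
    rw [Finset.sum_const, Finset.card_univ, Fintype.card_fin, Nat.cast_smul_eq_nsmul]
  · rw [Finset.sum_sigma', ← claim2, Finset.sum_sigma, DS2]

/-! ### assembling the right-hand side -/

def coefC (l k : ℕ) : ℝ := ((l + k).factorial : ℝ) / (k.factorial : ℝ)

lemma coefC_succ (l k : ℕ) :
    coefC l (k + 1) * ((k + 1 : ℕ) : ℝ) = coefC l k * ((k + l + 1 : ℕ) : ℝ) := by
  unfold coefC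
  have hk : (k.factorial : ℝ) ≠ 0 := Nat.cast_ne_zero.mpr k.factorial_ne_zero
  have hk1 : ((k + 1).factorial : ℝ) ≠ 0 := Nat.cast_ne_zero.mpr (k + 1).factorial_ne_zero
  rw [show l + (k + 1) = (l + k) + 1 from by omega, Nat.factorial_succ (l + k),
    Nat.factorial_succ k]
  push_cast
  field_simp
  ring

def Fpoly (l : ℕ) (m : ℕ × ℕ) : MvPolynomial Idx ℝ :=
  ∑ k ∈ Finset.range (m.1 + m.2 + 1), coefC l k • (X (Sum.inl (k + l)) * TT k m)

lemma Fpoly_eq_finsum (l : ℕ) (m : ℕ × ℕ) :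
    (∑ᶠ k : ℕ, coefC l k • ((X (Sum.inl (k + l)) : MvPolynomial Idx ℝ) * TT k m))
      = Fpoly l m := by
  rw [Fpoly, finsum_eq_finset_sum_of_support_subset]
  intro k hk
  simp only [Function.mem_support] at hk
  by_contra hkr
  simp only [Finset.coe_range, Set.mem_Iio, not_lt] at hkr
  exact hk (by rw [TT_eq_zero_of_lt (by omega), mul_zero, smul_zero])

lemma d1poly_Fpoly (l : ℕ) (m : ℕ × ℕ) :
    d1poly (Fpoly l m) = ((m.1 + 1 : ℕ) : ℝ) • Fpoly l (m + (1, 0)) := by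
  have hterm : ∀ k : ℕ, d1poly (coefC l k • (X (Sum.inl (k + l)) * TT k m))
      = coefC l k • (X (Sum.inl (k + l)) * DS k m)
        + (coefC l k * ((k + l + 1 : ℕ) : ℝ)) •
            (X (Sum.inr v10) * X (Sum.inl (k + l + 1)) * TT k m) := by
    intro k
    rw [d1poly_smul, d1poly_mul, d1poly_TT, d1poly_X_inl]
    simp only [smul_eq_C_mul, map_mul]
    ring
  have hstep : ∀ k : ℕ,
      ((m.1 + 1 : ℕ) : ℝ) •
          (coefC l (k + 1) • (X (Sum.inl (k + 1 + l)) * TT (k + 1) (m + (1, 0))))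
        = (coefC l k * ((k + l + 1 : ℕ) : ℝ)) •
            (X (Sum.inr v10) * X (Sum.inl (k + l + 1)) * TT k m)
          + coefC l (k + 1) • (X (Sum.inl (k + 1 + l)) * DS (k + 1) m) := by
    intro k
    have hs := star1 k m
    have hcC : (C (coefC l (k + 1)) : MvPolynomial Idx ℝ) * C ((k + 1 : ℕ) : ℝ)
        = C (coefC l k) * C ((k + l + 1 : ℕ) : ℝ) := by
      rw [← map_mul, ← map_mul, coefC_succ]
    rw [show k + 1 + l = k + l + 1 from by omega]
    simp only [smul_eq_C_mul, map_mul] at hs ⊢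
    linear_combination (C (coefC l (k + 1)) * (X (Sum.inl (k + l + 1)) : MvPolynomial Idx ℝ)) * hs
      + ((X (Sum.inr v10) : MvPolynomial Idx ℝ) * X (Sum.inl (k + l + 1)) * TT k m) * hcC
  have hshift : ∑ k ∈ Finset.range (m.1 + m.2 + 1),
        coefC l (k + 1) • ((X (Sum.inl (k + 1 + l)) : MvPolynomial Idx ℝ) * DS (k + 1) m)
      = ∑ k ∈ Finset.range (m.1 + m.2 + 1),
          coefC l k • (X (Sum.inl (k + l)) * DS k m) := by
    have h1 := Finset.sum_range_succ'
      (fun k => coefC l k • ((X (Sum.inl (k + l)) : MvPolynomial Idx ℝ) * DS k m))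
      (m.1 + m.2 + 1)
    have h2 := Finset.sum_range_succ
      (fun k => coefC l k • ((X (Sum.inl (k + l)) : MvPolynomial Idx ℝ) * DS k m))
      (m.1 + m.2 + 1)
    rw [DS_zero, mul_zero, smul_zero, add_zero] at h1
    rw [DS_eq_zero_of_lt (show m.1 + m.2 < m.1 + m.2 + 1 by omega), mul_zero, smul_zero,
      add_zero] at h2
    rw [← h1, h2]
  rw [Fpoly, d1poly_sum, Finset.sum_congr rfl (fun k _ => hterm k), Finset.sum_add_distrib]
  have hrange : (m + (1, 0)).1 + (m + (1, 0)).2 + 1 = m.1 + m.2 + 1 + 1 := by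
    show m.1 + 1 + (m.2 + 0) + 1 = m.1 + m.2 + 1 + 1
    omega
  rw [Fpoly, hrange]
  rw [Finset.sum_range_succ'
      (fun k => coefC l k • ((X (Sum.inl (k + l)) : MvPolynomial Idx ℝ) * TT k (m + (1, 0))))
      (m.1 + m.2 + 1)]
  rw [TT_zero_ne (add10_ne m), mul_zero, smul_zero, add_zero]
  rw [Finset.smul_sum, Finset.sum_congr rfl (fun k _ => hstep k), Finset.sum_add_distrib]
  rw [hshift]
  exact add_comm _ _

lemma d2poly_Fpoly (l : ℕ) (m : ℕ × ℕ) :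
    d2poly (Fpoly l m) = ((m.2 + 1 : ℕ) : ℝ) • Fpoly l (m + (0, 1)) := by
  have hterm : ∀ k : ℕ, d2poly (coefC l k • (X (Sum.inl (k + l)) * TT k m))
      = coefC l k • (X (Sum.inl (k + l)) * DS2 k m)
        + (coefC l k * ((k + l + 1 : ℕ) : ℝ)) •
            (X (Sum.inr v01) * X (Sum.inl (k + l + 1)) * TT k m) := by
    intro k
    rw [d2poly_smul, d2poly_mul, d2poly_TT, d2poly_X_inl]
    simp only [smul_eq_C_mul, map_mul]
    ring
  have hstep : ∀ k : ℕ,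
      ((m.2 + 1 : ℕ) : ℝ) •
          (coefC l (k + 1) • (X (Sum.inl (k + 1 + l)) * TT (k + 1) (m + (0, 1))))
        = (coefC l k * ((k + l + 1 : ℕ) : ℝ)) •
            (X (Sum.inr v01) * X (Sum.inl (k + l + 1)) * TT k m)
          + coefC l (k + 1) • (X (Sum.inl (k + 1 + l)) * DS2 (k + 1) m) := by
    intro k
    have hs := star2 k m
    have hcC : (C (coefC l (k + 1)) : MvPolynomial Idx ℝ) * C ((k + 1 : ℕ) : ℝ)
        = C (coefC l k) * C ((k + l + 1 : ℕ) : ℝ) := by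
      rw [← map_mul, ← map_mul, coefC_succ]
    rw [show k + 1 + l = k + l + 1 from by omega]
    simp only [smul_eq_C_mul, map_mul] at hs ⊢
    linear_combination (C (coefC l (k + 1)) * (X (Sum.inl (k + l + 1)) : MvPolynomial Idx ℝ)) * hs
      + ((X (Sum.inr v01) : MvPolynomial Idx ℝ) * X (Sum.inl (k + l + 1)) * TT k m) * hcC
  have hshift : ∑ k ∈ Finset.range (m.1 + m.2 + 1),
        coefC l (k + 1) • ((X (Sum.inl (k + 1 + l)) : MvPolynomial Idx ℝ) * DS2 (k + 1) m)
      = ∑ k ∈ Finset.range (m.1 + m.2 + 1),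
          coefC l k • (X (Sum.inl (k + l)) * DS2 k m) := by
    have h1 := Finset.sum_range_succ'
      (fun k => coefC l k • ((X (Sum.inl (k + l)) : MvPolynomial Idx ℝ) * DS2 k m))
      (m.1 + m.2 + 1)
    have h2 := Finset.sum_range_succ
      (fun k => coefC l k • ((X (Sum.inl (k + l)) : MvPolynomial Idx ℝ) * DS2 k m))
      (m.1 + m.2 + 1)
    rw [DS2_zero, mul_zero, smul_zero, add_zero] at h1
    rw [DS2_eq_zero_of_lt (show m.1 + m.2 < m.1 + m.2 + 1 by omega), mul_zero, smul_zero,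
      add_zero] at h2
    rw [← h1, h2]
  rw [Fpoly, d2poly_sum, Finset.sum_congr rfl (fun k _ => hterm k), Finset.sum_add_distrib]
  have hrange : (m + (0, 1)).1 + (m + (0, 1)).2 + 1 = m.1 + m.2 + 1 + 1 := by
    show m.1 + 0 + (m.2 + 1) + 1 = m.1 + m.2 + 1 + 1
    omega
  rw [Fpoly, hrange]
  rw [Finset.sum_range_succ'
      (fun k => coefC l k • ((X (Sum.inl (k + l)) : MvPolynomial Idx ℝ) * TT k (m + (0, 1))))
      (m.1 + m.2 + 1)]
  rw [TT_zero_ne (add01_ne m), mul_zero, smul_zero, add_zero]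
  rw [Finset.smul_sum, Finset.sum_congr rfl (fun k _ => hstep k), Finset.sum_add_distrib]
  rw [hshift]
  exact add_comm _ _

end FW21
end

open FW21 in
/-- **Faà di Bruno-type identity for the shift generators** (formula (fw21)). -/
theorem stmt11 (l : ℕ) (m : ℕ × ℕ) :
    (1 / ((m.1.factorial * m.2.factorial : ℕ) : ℝ)) •
        d1poly^[m.1] (d2poly^[m.2]
          ((l.factorial : ℝ) • (MvPolynomial.X (Sum.inl l) : MvPolynomial Idx ℝ)))
      = ∑ᶠ k : ℕ, (((l + k).factorial : ℝ) / (k.factorial : ℝ)) •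
          ((MvPolynomial.X (Sum.inl (k + l)) : MvPolynomial Idx ℝ) *
            ∑ᶠ t ∈ {t : Fin k → N2 | (∑ j, (t j).1) = m},
              ∏ j, (MvPolynomial.X (Sum.inr (t j)) : MvPolynomial Idx ℝ)) := by
  obtain ⟨m1, m2⟩ := m
  dsimp only
  have hbase : ∀ n : ℕ,
      d2poly^[n] ((l.factorial : ℝ) • (X (Sum.inl l) : MvPolynomial Idx ℝ))
        = ((n.factorial : ℕ) : ℝ) • Fpoly l (0, n) := by
    intro n
    induction n with
    | zero =>
      simp only [Function.iterate_zero, id_eq, Nat.factorial_zero, Nat.cast_one, one_smul]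
      rw [Fpoly, show ((0, 0) : ℕ × ℕ).1 + ((0, 0) : ℕ × ℕ).2 + 1 = 1 from rfl,
        Finset.sum_range_one, TT_zero, mul_one, Nat.zero_add]
      simp [coefC]
    | succ n ih =>
      rw [Function.iterate_succ_apply', ih, d2poly_smul, d2poly_Fpoly,
        show ((0, n) + (0, 1) : ℕ × ℕ) = (0, n + 1) from rfl, smul_smul]
      congr 1
      show (n.factorial : ℝ) * (((n : ℕ) + 1 : ℕ) : ℝ) = (((n + 1).factorial : ℕ) : ℝ)
      push_cast [Nat.factorial_succ]
      ring
  have hkey : ∀ n : ℕ,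
      d1poly^[n] (d2poly^[m2] ((l.factorial : ℝ) • (X (Sum.inl l) : MvPolynomial Idx ℝ)))
        = ((n.factorial * m2.factorial : ℕ) : ℝ) • Fpoly l (n, m2) := by
    intro n
    induction n with
    | zero =>
      rw [Function.iterate_zero, id_eq, hbase m2]
      norm_num
    | succ n ih =>
      rw [Function.iterate_succ_apply', ih, d1poly_smul, d1poly_Fpoly,
        show ((n, m2) + (1, 0) : ℕ × ℕ) = (n + 1, m2) from rfl, smul_smul]
      congr 1
      show ((n.factorial * m2.factorial : ℕ) : ℝ) * (((n : ℕ) + 1 : ℕ) : ℝ)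
        = (((n + 1).factorial * m2.factorial : ℕ) : ℝ)
      push_cast [Nat.factorial_succ]
      ring
  rw [hkey m1, smul_smul, one_div, inv_mul_cancel₀ (Nat.cast_ne_zero.mpr
    (Nat.mul_ne_zero m1.factorial_ne_zero m2.factorial_ne_zero)), one_smul,
    ← Fpoly_eq_finsum]
  exact finsum_congr fun k => by rw [TT_finsum]; rfl
end

section
/- Strict triangularity of the structure-group elements (property (tri04)). Let (π^(𝐧))_{𝐧∈ℕ²} be a family of elements of R such that, for each 𝐧, the z^γ-coefficient of π^(𝐧) vanishes unless [γ] ≥ 0 and |γ| > |𝐧|, and let Γ be a continuous ℝ-algebra endomorphism of R realizing (π^(𝐧))_{𝐧∈ℕ²}. Then for every multi-index γ: the z^γ-coefficient of Γ(z^γ) equals 1, and for every multi-index β ≠ γ, if the z^β-coefficient of Γ(z^γ) is nonzero then |β| > |γ|. Equivalently, Γ(z^γ) − z^γ is supported on multi-indices β with |β| > |γ|. -/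
open MvPolynomial

namespace Stmt19

open MvPowerSeries

noncomputable def deg (α w₁ w₂ : ℝ) (γ : MIdx) : ℝ := α * (brk γ : ℝ) + wsum w₁ w₂ γ

lemma brk_add (β γ : MIdx) : brk (β + γ) = brk β + brk γ := by
  unfold brk
  refine Finsupp.sum_add_index' ?_ ?_
  · rintro (k | m) <;> simp
  · rintro (k | m) b₁ b₂ <;> push_cast <;> ring

lemma wsum_add (w₁ w₂ : ℝ) (β γ : MIdx) : wsum w₁ w₂ (β + γ) = wsum w₁ w₂ β + wsum w₁ w₂ γ := by
  unfold wsum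
  refine Finsupp.sum_add_index' ?_ ?_
  · rintro (k | m) <;> simp
  · rintro (k | m) b₁ b₂ <;> push_cast <;> ring

lemma deg_add (α w₁ w₂ : ℝ) (β γ : MIdx) :
    deg α w₁ w₂ (β + γ) = deg α w₁ w₂ β + deg α w₁ w₂ γ := by
  unfold deg
  rw [brk_add, wsum_add]; push_cast; ring

lemma homdeg_eq (α w₁ w₂ : ℝ) (γ : MIdx) :
    homdeg α w₁ w₂ γ = deg α w₁ w₂ γ + α := by
  unfold homdeg deg; ring

lemma deg_single_inl (α w₁ w₂ : ℝ) (k : ℕ) :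
    deg α w₁ w₂ (Finsupp.single (Sum.inl k) 1) = α * k := by
  unfold deg brk wsum
  rw [Finsupp.sum_single_index (by simp), Finsupp.sum_single_index (by simp)]
  push_cast; ring

lemma deg_single_inr (α w₁ w₂ : ℝ) (m : N2) :
    deg α w₁ w₂ (Finsupp.single (Sum.inr m) 1) = wt w₁ w₂ m.1 - α := by
  unfold deg brk wsum
  rw [Finsupp.sum_single_index (by simp), Finsupp.sum_single_index (by simp)]
  push_cast; ring

/-- strict lower bound on the degrees in the support -/
def Lo (α w₁ w₂ c : ℝ) (f : PS) : Prop :=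
  ∀ β : MIdx, MvPowerSeries.coeff β f ≠ 0 → c < deg α w₁ w₂ β

lemma Lo.mul {α w₁ w₂ c d : ℝ} {f g : PS} (hf : Lo α w₁ w₂ c f) (hg : Lo α w₁ w₂ d g) :
    Lo α w₁ w₂ (c + d) (f * g) := by
  intro β hβ
  classical
  rw [MvPowerSeries.coeff_mul] at hβ
  obtain ⟨p, hp, hne⟩ := Finset.exists_ne_zero_of_sum_ne_zero hβ
  have h1 : MvPowerSeries.coeff p.1 f ≠ 0 := fun h => hne (by rw [h, zero_mul])
  have h2 : MvPowerSeries.coeff p.2 g ≠ 0 := fun h => hne (by rw [h, mul_zero])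
  have hpd : p.1 + p.2 = β := Finset.HasAntidiagonal.mem_antidiagonal.1 hp
  have := hf p.1 h1
  have := hg p.2 h2
  have : deg α w₁ w₂ β = deg α w₁ w₂ p.1 + deg α w₁ w₂ p.2 := by
    rw [← hpd, deg_add]
  linarith

/-- a "good" series: coefficient 1 at `γ`, all other coefficients of strictly larger degree -/
def Good (α w₁ w₂ : ℝ) (γ : MIdx) (f : PS) : Prop :=
  MvPowerSeries.coeff γ f = 1 ∧
    ∀ β : MIdx, β ≠ γ → MvPowerSeries.coeff β f ≠ 0 →
      deg α w₁ w₂ γ < deg α w₁ w₂ β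

lemma Good.le {α w₁ w₂ : ℝ} {γ : MIdx} {f : PS} (hf : Good α w₁ w₂ γ f)
    (β : MIdx) (hβ : MvPowerSeries.coeff β f ≠ 0) : deg α w₁ w₂ γ ≤ deg α w₁ w₂ β := by
  by_cases h : β = γ
  · rw [h]
  · exact (hf.2 β h hβ).le

lemma Good.one (α w₁ w₂ : ℝ) : Good α w₁ w₂ 0 (1 : PS) := by
  classical
  constructor
  · simp [MvPowerSeries.coeff_one]
  · intro β hβ h
    rw [MvPowerSeries.coeff_one, if_neg hβ] at h
    exact absurd rfl h

lemma Good.mul {α w₁ w₂ : ℝ} {γ δ : MIdx} {f g : PS}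
    (hf : Good α w₁ w₂ γ f) (hg : Good α w₁ w₂ δ g) : Good α w₁ w₂ (γ + δ) (f * g) := by
  classical
  constructor
  · rw [MvPowerSeries.coeff_mul]
    rw [Finset.sum_eq_single_of_mem (γ, δ) (Finset.HasAntidiagonal.mem_antidiagonal.2 rfl)]
    · rw [hf.1, hg.1, one_mul]
    · rintro ⟨b, c⟩ hbc hne
      have hsum : b + c = γ + δ := Finset.HasAntidiagonal.mem_antidiagonal.1 hbc
      by_contra h
      have h1 : MvPowerSeries.coeff b f ≠ 0 := fun h' => h (by rw [h', zero_mul])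
      have h2 : MvPowerSeries.coeff c g ≠ 0 := fun h' => h (by rw [h', mul_zero])
      by_cases hb : b = γ
      · subst hb
        have : c = δ := by
          have := hsum
          exact add_left_cancel this
        exact hne (by rw [this])
      · have hlt : deg α w₁ w₂ γ < deg α w₁ w₂ b := hf.2 b hb h1
        have hle : deg α w₁ w₂ δ ≤ deg α w₁ w₂ c := hg.le c h2
        have heq : deg α w₁ w₂ b + deg α w₁ w₂ c = deg α w₁ w₂ γ + deg α w₁ w₂ δ := by
          rw [← deg_add, ← deg_add, hsum]
        linarith
  · intro β hβ h
    rw [MvPowerSeries.coeff_mul] at h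
    obtain ⟨⟨b, c⟩, hbc, hne⟩ := Finset.exists_ne_zero_of_sum_ne_zero h
    have hsum : b + c = β := Finset.HasAntidiagonal.mem_antidiagonal.1 hbc
    have h1 : MvPowerSeries.coeff b f ≠ 0 := fun h' => hne (by rw [h', zero_mul])
    have h2 : MvPowerSeries.coeff c g ≠ 0 := fun h' => hne (by rw [h', mul_zero])
    have heq : deg α w₁ w₂ β = deg α w₁ w₂ b + deg α w₁ w₂ c := by
      rw [← hsum, deg_add]
    have hb : deg α w₁ w₂ γ ≤ deg α w₁ w₂ b := hf.le b h1
    have hc : deg α w₁ w₂ δ ≤ deg α w₁ w₂ c := hg.le c h2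
    rcases eq_or_ne b γ with rfl | hbne
    · rcases eq_or_ne c δ with rfl | hcne
      · exact absurd hsum.symm hβ
      · have := hg.2 c hcne h2
        rw [deg_add, heq]; linarith
    · have := hf.2 b hbne h1
      rw [deg_add, heq]; linarith

lemma Good.prod {α w₁ w₂ : ℝ} {s : Finset Idx} {δ : Idx → MIdx} {F : Idx → PS}
    (h : ∀ i ∈ s, Good α w₁ w₂ (δ i) (F i)) :
    Good α w₁ w₂ (∑ i ∈ s, δ i) (∏ i ∈ s, F i) := by
  classical
  induction s using Finset.induction_on with
  | empty => simpa using Good.one α w₁ w₂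
  | insert _ _ hns ih =>
    rename_i a s
    rw [Finset.sum_insert hns, Finset.prod_insert hns]
    exact (h a (Finset.mem_insert_self a s)).mul
      (ih fun i hi => h i (Finset.mem_insert_of_mem hi))

lemma monomial_eq_prod (γ : MIdx) :
    MvPowerSeries.monomial γ 1 = ∏ i ∈ γ.support, (MvPowerSeries.X i : PS) ^ (γ i) := by
  classical
  have key : ∀ s : Finset Idx,
      (∏ i ∈ s, (MvPowerSeries.X i : PS) ^ (γ i)) =
        MvPowerSeries.monomial (∑ i ∈ s, Finsupp.single i (γ i)) 1 := by
    intro s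
    induction s using Finset.induction_on with
    | empty => simp [MvPowerSeries.monomial_zero_one]
    | insert _ _ hns ih =>
      rename_i a s
      rw [Finset.prod_insert hns, Finset.sum_insert hns, ih, MvPowerSeries.X_pow_eq,
        MvPowerSeries.monomial_mul_monomial, one_mul]
  rw [key]
  have h : (∑ i ∈ γ.support, Finsupp.single i (γ i)) = γ := by
    have h := Finsupp.sum_single γ
    rw [Finsupp.sum] at h
    exact h
  rw [h]

end Stmt19

namespace Stmt19

lemma coeff_hasSum {F : ℕ → PS} {S : PS} (h : HasSum F S) (β : MIdx) :
    HasSum (fun l => MvPowerSeries.coeff β (F l)) (MvPowerSeries.coeff β S) :=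
  h.map ((MvPowerSeries.coeff β).toAddMonoidHom)
    (continuous_apply β : Continuous fun f : (MIdx) → ℝ => f β)

section

variable {α w₁ w₂ : ℝ} {π : ℕ × ℕ → PS}

variable (hα : 0 < α)
  (hπ : ∀ (n : ℕ × ℕ) (γ : MIdx), MvPowerSeries.coeff γ (π n) ≠ 0 →
      0 ≤ brk γ ∧ wt w₁ w₂ n < homdeg α w₁ w₂ γ)

include hπ in
lemma lo_pi (n : ℕ × ℕ) : Lo α w₁ w₂ (wt w₁ w₂ n - α) (π n) := by
  intro β hβ
  have := (hπ n β hβ).2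
  rw [homdeg_eq] at this
  linarith

include hπ in
lemma lo_pi0_pow : ∀ l : ℕ, 1 ≤ l → Lo α w₁ w₂ (-(l : ℝ) * α) (π (0, 0) ^ l) := by
  have h0 : Lo α w₁ w₂ (-α) (π (0, 0)) := by
    have := lo_pi hπ (0, 0)
    simpa [wt] using this
  intro l hl
  induction l with
  | zero => exact absurd hl (by omega)
  | succ n ih =>
    rcases Nat.eq_zero_or_pos n with rfl | hn
    · simpa using h0
    · have key := (ih hn).mul h0
      push_cast
      rw [show (-((n:ℝ) + 1)) * α = -(n:ℝ) * α + -α from by ring, pow_succ]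
      exact key

include hπ in
lemma term_bound (k l : ℕ) (hl : 1 ≤ l) (β : MIdx)
    (h : MvPowerSeries.coeff β
        (((k + l).choose k : ℝ) • (π (0, 0) ^ l * MvPowerSeries.X (Sum.inl (k + l)))) ≠ 0) :
    α * k < deg α w₁ w₂ β := by
  classical
  rw [map_smul, smul_eq_mul] at h
  have h' : MvPowerSeries.coeff β (π (0, 0) ^ l * MvPowerSeries.X (Sum.inl (k + l))) ≠ 0 :=
    fun hz => h (by rw [hz, mul_zero])
  rw [MvPowerSeries.coeff_mul] at h'
  obtain ⟨⟨b, c⟩, hbc, hne⟩ := Finset.exists_ne_zero_of_sum_ne_zero h'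
  have hsum : b + c = β := Finset.HasAntidiagonal.mem_antidiagonal.1 hbc
  have h1 : MvPowerSeries.coeff b (π (0, 0) ^ l) ≠ 0 := fun h' => hne (by rw [h', zero_mul])
  have h2 : MvPowerSeries.coeff c (MvPowerSeries.X (Sum.inl (k + l)) : PS) ≠ 0 :=
    fun h' => hne (by rw [h', mul_zero])
  rw [MvPowerSeries.coeff_X] at h2
  have hc : c = Finsupp.single (Sum.inl (k + l)) 1 := by
    by_contra hcne
    rw [if_neg hcne] at h2
    exact h2 rfl
  have hb := lo_pi0_pow hπ l hl b h1
  have : deg α w₁ w₂ β = deg α w₁ w₂ b + deg α w₁ w₂ c := by rw [← hsum, deg_add]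
  rw [hc, deg_single_inl] at this
  push_cast at this ⊢
  nlinarith [hb]

end

end Stmt19

namespace Stmt19

section

variable {α w₁ w₂ : ℝ} {π : ℕ × ℕ → PS} {Γ : PS →ₐ[ℝ] PS}

variable (hπ : ∀ (n : ℕ × ℕ) (γ : MIdx), MvPowerSeries.coeff γ (π n) ≠ 0 →
      0 ≤ brk γ ∧ wt w₁ w₂ n < homdeg α w₁ w₂ γ)

include hπ in
lemma good_inr (hΓ : Realizes Γ π) (m : N2) :
    Good α w₁ w₂ (Finsupp.single (Sum.inr m) 1) (Γ (MvPowerSeries.X (Sum.inr m))) := by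
  classical
  rw [hΓ.2.1 m]
  have hpi := lo_pi hπ m.1
  constructor
  · rw [map_add, MvPowerSeries.coeff_X, if_pos rfl]
    have : MvPowerSeries.coeff (Finsupp.single (Sum.inr m) 1) (π m.1) = 0 := by
      by_contra h
      have := hpi _ h
      rw [deg_single_inr] at this
      linarith
    rw [this, add_zero]
  · intro β hβ h
    rw [map_add, MvPowerSeries.coeff_X, if_neg hβ, zero_add] at h
    have := hpi β h
    rw [deg_single_inr]
    linarith

include hπ in
lemma good_inl (hα : 0 < α) (hΓ : Realizes Γ π) (k : ℕ) :
    Good α w₁ w₂ (Finsupp.single (Sum.inl k) 1) (Γ (MvPowerSeries.X (Sum.inl k))) := by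
  classical
  have hk := hΓ.2.2 k
  have hterm0 : ∀ β : MIdx,
      MvPowerSeries.coeff β
        (((k + 0).choose k : ℝ) • (π (0, 0) ^ 0 * MvPowerSeries.X (Sum.inl (k + 0)))) =
      MvPowerSeries.coeff β (MvPowerSeries.X (Sum.inl k) : PS) := by
    intro β
    simp [Nat.choose_self]
  constructor
  · have hcs := coeff_hasSum hk (Finsupp.single (Sum.inl k) 1)
    have hvan : ∀ l : ℕ, l ≠ 0 →
        MvPowerSeries.coeff (Finsupp.single (Sum.inl k) 1)
          (((k + l).choose k : ℝ) • (π (0, 0) ^ l * MvPowerSeries.X (Sum.inl (k + l)))) = 0 := by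
      intro l hl
      by_contra h
      have := term_bound hπ k l (Nat.one_le_iff_ne_zero.2 hl) _ h
      rw [deg_single_inl] at this
      linarith
    have hone := hasSum_single (f := fun l =>
        MvPowerSeries.coeff (Finsupp.single (Sum.inl k) 1)
          (((k + l).choose k : ℝ) • (π (0, 0) ^ l * MvPowerSeries.X (Sum.inl (k + l))))) 0 hvan
    have heq := hcs.unique hone
    rw [heq]
    show MvPowerSeries.coeff (Finsupp.single (Sum.inl k) 1)
        (((k + 0).choose k : ℝ) • (π (0, 0) ^ 0 * MvPowerSeries.X (Sum.inl (k + 0)))) = 1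
    rw [hterm0, MvPowerSeries.coeff_X, if_pos rfl]
  · intro β hβ h
    have hcs := coeff_hasSum hk β
    have hex : ∃ l : ℕ,
        MvPowerSeries.coeff β
          (((k + l).choose k : ℝ) • (π (0, 0) ^ l * MvPowerSeries.X (Sum.inl (k + l)))) ≠ 0 := by
      by_contra hall
      push_neg at hall
      have hz : (fun l : ℕ =>
          MvPowerSeries.coeff β
            (((k + l).choose k : ℝ) • (π (0, 0) ^ l * MvPowerSeries.X (Sum.inl (k + l))))) =
          fun _ => (0 : ℝ) := funext hall
      have : HasSum (fun l : ℕ =>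
          MvPowerSeries.coeff β
            (((k + l).choose k : ℝ) • (π (0, 0) ^ l * MvPowerSeries.X (Sum.inl (k + l))))) 0 := by
        rw [hz]; exact hasSum_zero
      exact h (hcs.unique this)
    obtain ⟨l, hl⟩ := hex
    rcases Nat.eq_zero_or_pos l with rfl | hlpos
    · rw [hterm0, MvPowerSeries.coeff_X, if_neg hβ] at hl
      exact absurd rfl hl
    · have := term_bound hπ k l hlpos β hl
      rw [deg_single_inl]
      exact this

include hπ in
lemma good_main (hα : 0 < α) (hΓ : Realizes Γ π) (γ : MIdx) :
    Good α w₁ w₂ γ (Γ (MvPowerSeries.monomial γ 1)) := by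
  classical
  rw [monomial_eq_prod, map_prod]
  have hgen : ∀ i : Idx, Good α w₁ w₂ (Finsupp.single i 1) (Γ (MvPowerSeries.X i)) := by
    rintro (k | m)
    · exact good_inl hπ hα hΓ k
    · exact good_inr hπ hΓ m
  have hpow : ∀ i : Idx, ∀ n : ℕ, Good α w₁ w₂ (Finsupp.single i n) (Γ (MvPowerSeries.X i) ^ n) := by
    intro i n
    induction n with
    | zero => simpa using Good.one α w₁ w₂
    | succ n ih =>
      rw [pow_succ, show Finsupp.single i (n + 1) = Finsupp.single i n + Finsupp.single i 1
        from Finsupp.single_add i n 1]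
      exact ih.mul (hgen i)
  have := Good.prod (s := γ.support) (δ := fun i => Finsupp.single i (γ i))
    (F := fun i => Γ (MvPowerSeries.X i) ^ (γ i)) (fun i _ => hpow i (γ i))
  have hγ : (∑ i ∈ γ.support, Finsupp.single i (γ i)) = γ := by
    have h := Finsupp.sum_single γ
    rw [Finsupp.sum] at h
    exact h
  rw [hγ] at this
  simp_rw [map_pow]
  exact this

end

end Stmt19

/-- **Strict triangularity of the structure-group elements** (property (tri04)). -/
theorem stmt19 (α w₁ w₂ : ℝ) (hα : 0 < α) (hw₁ : 0 < w₁) (hw₂ : 0 < w₂)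
    (π : ℕ × ℕ → PS)
    (hπ : ∀ (n : ℕ × ℕ) (γ : MIdx), MvPowerSeries.coeff γ (π n) ≠ 0 →
        0 ≤ brk γ ∧ wt w₁ w₂ n < homdeg α w₁ w₂ γ)
    (Γ : PS →ₐ[ℝ] PS) (hΓ : Realizes Γ π) (γ : MIdx) :
    MvPowerSeries.coeff γ (Γ (MvPowerSeries.monomial γ 1)) = 1 ∧
      ∀ β : MIdx, β ≠ γ →
        MvPowerSeries.coeff β (Γ (MvPowerSeries.monomial γ 1)) ≠ 0 →
          homdeg α w₁ w₂ γ < homdeg α w₁ w₂ β := by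
  have h := Stmt19.good_main hπ hα hΓ γ
  refine ⟨h.1, fun β hβ hne => ?_⟩
  have := h.2 β hβ hne
  rw [Stmt19.homdeg_eq, Stmt19.homdeg_eq]
  linarith
end
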